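/- arXiv:2411.07659 — 6 statements merged into one kernel-verified Lean document; each statement's English description precedes it below -/
import Mathlib

section
/- Let I ⊆ ℝ be an interval, let f : ℝ → ℝ be continuous and strictly monotone on I, and let g be the inverse of the restriction of f to I, defined on the interval f(I). If the f-potential λ_f is convex on L^c(Ω,I) or concave on L^c(Ω,I), then the g-potential λ_g is convex on L^c(Ω,f(I)) or concave on L^c(Ω,f(I)). -/
open MeasureTheory

/-- `L^c(Ω, I)`: measurable functions whose range is contained in a compact subset of `I`. -/
def MemLc {Ω : Type*} [MeasurableSpace Ω] (I : Set ℝ) (φ : Ω → ℝ) : Prop :=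
  Measurable φ ∧ ∃ K : Set ℝ, K ⊆ I ∧ IsCompact K ∧ ∀ ω, φ ω ∈ K

/-- The `f`-potential `λ_f(φ) = f⁻¹(∫ f(φ(ω)) dP(ω))`, where `f⁻¹` is the inverse of the
restriction of `f` to `I`. -/
noncomputable def fPotential {Ω : Type*} [MeasurableSpace Ω] (P : Measure Ω)
    (f : ℝ → ℝ) (I : Set ℝ) (φ : Ω → ℝ) : ℝ :=
  Function.invFunOn f I (∫ ω, f (φ ω) ∂P)

open Set Function Filter
open scoped Classical

namespace IPaux

/-- the two-point quasi-arithmetic mean determined by `f` on `I` -/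
noncomputable def G (f : ℝ → ℝ) (I : Set ℝ) (t x y : ℝ) : ℝ :=
  Function.invFunOn f I (t * f x + (1 - t) * f y)

/-- the multiplicative/affine orbit of `p` -/
def Orb (p : ℝ) : Set ℝ :=
  {t | ∀ S : Set ℝ, p ∈ S → (∀ x ∈ S, p * x ∈ S) → (∀ x ∈ S, p + (1 - p) * x ∈ S) → t ∈ S}

lemma p_mem_Orb {p : ℝ} : p ∈ Orb p := fun _ hp _ _ => hp

lemma Orb_mul {p t : ℝ} (h : t ∈ Orb p) : p * t ∈ Orb p :=
  fun S hp h1 h2 => h1 _ (h S hp h1 h2)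

lemma Orb_aff {p t : ℝ} (h : t ∈ Orb p) : p + (1 - p) * t ∈ Orb p :=
  fun S hp h1 h2 => h2 _ (h S hp h1 h2)

lemma Orb_subset {p : ℝ} {S : Set ℝ} (hp : p ∈ S) (h1 : ∀ x ∈ S, p * x ∈ S)
    (h2 : ∀ x ∈ S, p + (1 - p) * x ∈ S) : Orb p ⊆ S := fun _ ht => ht S hp h1 h2

lemma Orb_sub_Icc {p : ℝ} (hp : p ∈ Ioo (0:ℝ) 1) : Orb p ⊆ Icc (0:ℝ) 1 := by
  apply Orb_subset
  · exact ⟨hp.1.le, hp.2.le⟩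
  · rintro x ⟨h0, h1⟩
    exact ⟨mul_nonneg hp.1.le h0, by nlinarith [hp.1, hp.2]⟩
  · rintro x ⟨h0, h1⟩
    exact ⟨by nlinarith [hp.1, hp.2], by nlinarith [hp.1, hp.2]⟩

lemma Orb_approx {p : ℝ} (hp : p ∈ Ioo (0:ℝ) 1) :
    ∀ n : ℕ, ∀ t ∈ Icc (0:ℝ) 1, ∃ s ∈ Orb p, |t - s| ≤ (max p (1 - p)) ^ n := by
  have hp0 : (0:ℝ) < p := hp.1
  have hp1 : p < 1 := hp.2
  have hc0 : (0:ℝ) ≤ max p (1 - p) := le_trans hp0.le (le_max_left _ _)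
  intro n
  induction n with
  | zero =>
    intro t ht
    refine ⟨p, p_mem_Orb, ?_⟩
    rw [pow_zero, abs_le]
    constructor <;> nlinarith [ht.1, ht.2]
  | succ n ih =>
    intro t ht
    by_cases htp : t ≤ p
    · obtain ⟨s, hs, hb⟩ := ih (t / p)
        ⟨div_nonneg ht.1 hp0.le, by rw [div_le_one hp0]; exact htp⟩
      refine ⟨p * s, Orb_mul hs, ?_⟩
      have heq : t - p * s = p * (t / p - s) := by field_simp
      rw [heq, abs_mul, abs_of_pos hp0, pow_succ']
      exact mul_le_mul (le_max_left _ _) hb (abs_nonneg _) hc0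
    · push_neg at htp
      have h1p : (0:ℝ) < 1 - p := by linarith
      obtain ⟨s, hs, hb⟩ := ih ((t - p) / (1 - p))
        ⟨div_nonneg (by linarith) h1p.le, by rw [div_le_one h1p]; linarith [ht.2]⟩
      refine ⟨p + (1 - p) * s, Orb_aff hs, ?_⟩
      have heq : t - (p + (1 - p) * s) = (1 - p) * ((t - p) / (1 - p) - s) := by
        field_simp
        ring
      rw [heq, abs_mul, abs_of_pos h1p, pow_succ']
      exact mul_le_mul (le_max_right _ _) hb (abs_nonneg _) hc0

variable {I : Set ℝ} {f : ℝ → ℝ}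

lemma hinj_of (hfm : StrictMonoOn f I ∨ StrictAntiOn f I) : InjOn f I := by
  rcases hfm with h | h
  · exact h.injOn
  · exact h.injOn

lemma invFunOn_eq_self (hinj : InjOn f I) {x : ℝ} (hx : x ∈ I) :
    invFunOn f I (f x) = x := hinj.leftInvOn_invFunOn hx

lemma image_convex {J : Set ℝ} (hJ : Convex ℝ J) (hfc : ContinuousOn f J) :
    Convex ℝ (f '' J) := by
  rw [convex_iff_ordConnected]
  exact (hJ.isPreconnected.image f hfc).ordConnected

lemma comb_mem {s : Set ℝ} (hs : Convex ℝ s) {t u v : ℝ} (hu : u ∈ s) (hv : v ∈ s)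
    (ht : t ∈ Icc (0:ℝ) 1) : t * u + (1 - t) * v ∈ s := by
  have := hs hu hv ht.1 (by linarith [ht.2]) (by ring : t + (1 - t) = 1)
  simpa [smul_eq_mul] using this

lemma inv_mem_of_mem_image (hinj : InjOn f I) {J : Set ℝ} (hJI : J ⊆ I) {y : ℝ}
    (hy : y ∈ f '' J) : invFunOn f I y ∈ J ∧ f (invFunOn f I y) = y := by
  obtain ⟨x, hx, rfl⟩ := hy
  rw [invFunOn_eq_self hinj (hJI hx)]
  exact ⟨hx, rfl⟩

lemma invFunOn_invFunOn (hinj : InjOn f I) {z : ℝ} (hz : z ∈ I) :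
    Function.invFunOn (Function.invFunOn f I) (f '' I) z = f z := by
  have hex : ∃ y ∈ f '' I, invFunOn f I y = z :=
    ⟨f z, mem_image_of_mem f hz, invFunOn_eq_self hinj hz⟩
  have hmem := Function.invFunOn_mem hex
  have heq := Function.invFunOn_eq hex
  obtain ⟨x, hx, hfx⟩ := hmem
  rw [← hfx] at heq ⊢
  rw [invFunOn_eq_self hinj hx] at heq
  rw [heq]

lemma G_mem (hIconv : Convex ℝ I) (hfc : ContinuousOn f I) (hinj : InjOn f I)
    {t x y : ℝ} (hx : x ∈ I) (hy : y ∈ I) (ht : t ∈ Icc (0:ℝ) 1) :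
    G f I t x y ∈ I ∧ f (G f I t x y) = t * f x + (1 - t) * f y := by
  have hmem : t * f x + (1 - t) * f y ∈ f '' I :=
    comb_mem (image_convex hIconv hfc) (mem_image_of_mem f hx) (mem_image_of_mem f hy) ht
  exact inv_mem_of_mem_image hinj (subset_refl I) hmem

section Mono
variable (hIconv : Convex ℝ I) (hfc : ContinuousOn f I)
  (hfm : StrictMonoOn f I ∨ StrictAntiOn f I)

include hIconv hfc hfm in
lemma G_mono₁ {t x x' y : ℝ} (ht : t ∈ Icc (0:ℝ) 1) (hx : x ∈ I) (hx' : x' ∈ I)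
    (hy : y ∈ I) (hxx : x ≤ x') : G f I t x y ≤ G f I t x' y := by
  have hinj := hinj_of hfm
  obtain ⟨hm1, he1⟩ := G_mem hIconv hfc hinj hx hy ht
  obtain ⟨hm2, he2⟩ := G_mem hIconv hfc hinj hx' hy ht
  by_contra hlt
  push_neg at hlt
  rcases hfm with h | h
  · have hf : f x ≤ f x' := h.monotoneOn hx hx' hxx
    have : f (G f I t x' y) < f (G f I t x y) := h hm2 hm1 hlt
    rw [he1, he2] at this
    nlinarith [ht.1, ht.2]
  · have hf : f x' ≤ f x := h.antitoneOn hx hx' hxx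
    have : f (G f I t x y) < f (G f I t x' y) := h hm2 hm1 hlt
    rw [he1, he2] at this
    nlinarith [ht.1, ht.2]

include hIconv hfc hfm in
lemma G_mono₂ {t x y y' : ℝ} (ht : t ∈ Icc (0:ℝ) 1) (hx : x ∈ I) (hy : y ∈ I)
    (hy' : y' ∈ I) (hyy : y ≤ y') : G f I t x y ≤ G f I t x y' := by
  have hinj := hinj_of hfm
  obtain ⟨hm1, he1⟩ := G_mem hIconv hfc hinj hx hy ht
  obtain ⟨hm2, he2⟩ := G_mem hIconv hfc hinj hx hy' ht
  by_contra hlt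
  push_neg at hlt
  rcases hfm with h | h
  · have hf : f y ≤ f y' := h.monotoneOn hy hy' hyy
    have : f (G f I t x y') < f (G f I t x y) := h hm2 hm1 hlt
    rw [he1, he2] at this
    nlinarith [ht.1, ht.2]
  · have hf : f y' ≤ f y := h.antitoneOn hy hy' hyy
    have : f (G f I t x y) < f (G f I t x y') := h hm2 hm1 hlt
    rw [he1, he2] at this
    nlinarith [ht.1, ht.2]

include hIconv hfc in
lemma G_comp₁ (hinj : InjOn f I) {p t x y : ℝ} (ht : t ∈ Icc (0:ℝ) 1)
    (hx : x ∈ I) (hy : y ∈ I) :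
    G f I p (G f I t x y) y = G f I (p * t) x y := by
  obtain ⟨_, he⟩ := G_mem hIconv hfc hinj hx hy ht
  have h0 : G f I p (G f I t x y) y
      = invFunOn f I (p * f (G f I t x y) + (1 - p) * f y) := rfl
  rw [h0, he]
  unfold G
  congr 1
  ring

include hIconv hfc in
lemma G_comp₂ (hinj : InjOn f I) {p t x y : ℝ} (ht : t ∈ Icc (0:ℝ) 1)
    (hx : x ∈ I) (hy : y ∈ I) :
    G f I p x (G f I t x y) = G f I (p + (1 - p) * t) x y := by
  obtain ⟨_, he⟩ := G_mem hIconv hfc hinj hx hy ht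
  have h0 : G f I p x (G f I t x y)
      = invFunOn f I (p * f x + (1 - p) * f (G f I t x y)) := rfl
  rw [h0, he]
  unfold G
  congr 1
  ring

end Mono

lemma contOn_inv (hfc : ContinuousOn f I) (hinj : InjOn f I) {J : Set ℝ}
    (hJc : IsCompact J) (hJI : J ⊆ I) : ContinuousOn (invFunOn f I) (f '' J) := by
  haveI : CompactSpace J := isCompact_iff_compactSpace.mp hJc
  set e : J ≃ (f '' J : Set ℝ) := Equiv.Set.imageOfInjOn f J (hinj.mono hJI) with he_def
  have he : Continuous e := by
    apply Continuous.subtype_mk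
    exact (hfc.mono hJI).restrict
  let h : J ≃ₜ (f '' J : Set ℝ) := Continuous.homeoOfEquivCompactToT2 he
  have key : Set.domRestrict (f '' J) (invFunOn f I) = Subtype.val ∘ h.symm := by
    funext y
    have h1 : f ((h.symm y : ℝ)) = (y : ℝ) := by
      have := congrArg Subtype.val (h.apply_symm_apply y)
      simpa [h, he_def, Equiv.Set.imageOfInjOn, Continuous.homeoOfEquivCompactToT2] using this
    have h2 : ((h.symm y : ℝ)) ∈ J := (h.symm y).2
    simp only [Set.domRestrict, Function.comp]
    rw [← h1, invFunOn_eq_self hinj (hJI h2)]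
  rw [continuousOn_iff_continuous_restrict, key]
  exact continuous_subtype_val.comp h.symm.continuous

lemma exists_J (hIconv : Convex ℝ I) (hfc : ContinuousOn f I) {K : Set ℝ}
    (hKc : IsCompact K) (hKne : K.Nonempty) (hKI : K ⊆ f '' I) :
    ∃ J : Set ℝ, IsCompact J ∧ Convex ℝ J ∧ IsClosed J ∧ J ⊆ I ∧ K ⊆ f '' J := by
  obtain ⟨xu, hxuI, hxu⟩ := hKI (hKc.sInf_mem hKne)
  obtain ⟨xv, hxvI, hxv⟩ := hKI (hKc.sSup_mem hKne)
  have hmin : min xu xv ∈ I := by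
    rcases le_total xu xv with h | h
    · rwa [min_eq_left h]
    · rwa [min_eq_right h]
  have hmax : max xu xv ∈ I := by
    rcases le_total xu xv with h | h
    · rwa [max_eq_right h]
    · rwa [max_eq_left h]
  have hJI : Icc (min xu xv) (max xu xv) ⊆ I := hIconv.ordConnected.out hmin hmax
  refine ⟨Icc (min xu xv) (max xu xv), isCompact_Icc, convex_Icc _ _, isClosed_Icc, hJI, ?_⟩
  have hconv : Convex ℝ (f '' Icc (min xu xv) (max xu xv)) :=
    image_convex (convex_Icc _ _) (hfc.mono hJI)
  have hu : sInf K ∈ f '' Icc (min xu xv) (max xu xv) :=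
    ⟨xu, ⟨min_le_left _ _, le_max_left _ _⟩, hxu⟩
  have hv : sSup K ∈ f '' Icc (min xu xv) (max xu xv) :=
    ⟨xv, ⟨min_le_right _ _, le_max_right _ _⟩, hxv⟩
  intro k hk
  exact hconv.ordConnected.out hu hv
    ⟨csInf_le hKc.bddBelow hk, le_csSup hKc.bddAbove hk⟩

lemma contG (hIconv : Convex ℝ I) (hfc : ContinuousOn f I) (hinj : InjOn f I)
    {x y : ℝ} (hx : x ∈ I) (hy : y ∈ I) :
    ContinuousOn (fun u => G f I u x y) (Icc (0:ℝ) 1) := by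
  set J : Set ℝ := Icc (min x y) (max x y) with hJ
  have hminI : min x y ∈ I := by
    rcases le_total x y with h | h
    · rwa [min_eq_left h]
    · rwa [min_eq_right h]
  have hmaxI : max x y ∈ I := by
    rcases le_total x y with h | h
    · rwa [max_eq_right h]
    · rwa [max_eq_left h]
  have hJI : J ⊆ I := hIconv.ordConnected.out hminI hmaxI
  have hxJ : x ∈ J := ⟨min_le_left _ _, le_max_left _ _⟩
  have hyJ : y ∈ J := ⟨min_le_right _ _, le_max_right _ _⟩
  have hconv : Convex ℝ (f '' J) := image_convex (convex_Icc _ _) (hfc.mono hJI)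
  have hmaps : MapsTo (fun u => u * f x + (1 - u) * f y) (Icc (0:ℝ) 1) (f '' J) :=
    fun u hu => comb_mem hconv (mem_image_of_mem f hxJ) (mem_image_of_mem f hyJ) hu
  exact (contOn_inv hfc hinj isCompact_Icc hJI).comp
    (Continuous.continuousOn (by continuity)) hmaps

section Comp
variable (hIconv : Convex ℝ I) (hfc : ContinuousOn f I)
  (hfm : StrictMonoOn f I ∨ StrictAntiOn f I)

include hIconv hfc hfm in
lemma comp_conv₁ {p t : ℝ} (hp : p ∈ Icc (0:ℝ) 1) (ht : t ∈ Icc (0:ℝ) 1)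
    (hcp : ConvexOn ℝ (I ×ˢ I) fun q : ℝ × ℝ => G f I p q.1 q.2)
    (hct : ConvexOn ℝ (I ×ˢ I) fun q : ℝ × ℝ => G f I t q.1 q.2) :
    ConvexOn ℝ (I ×ˢ I) fun q : ℝ × ℝ => G f I (p * t) q.1 q.2 := by
  have hinj := hinj_of hfm
  refine ⟨hIconv.prod hIconv, ?_⟩
  rintro ⟨x₁, y₁⟩ ⟨hx₁, hy₁⟩ ⟨x₂, y₂⟩ ⟨hx₂, hy₂⟩ a b ha hb hab
  simp only [Prod.smul_mk, Prod.mk_add_mk, smul_eq_mul]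
  set mx := a * x₁ + b * x₂ with hmx_def
  set my := a * y₁ + b * y₂ with hmy_def
  have hmx : mx ∈ I := by
    have := hIconv hx₁ hx₂ ha hb hab; simpa [smul_eq_mul] using this
  have hmy : my ∈ I := by
    have := hIconv hy₁ hy₂ ha hb hab; simpa [smul_eq_mul] using this
  obtain ⟨hGm, _⟩ := G_mem hIconv hfc hinj hmx hmy ht
  obtain ⟨hG1, _⟩ := G_mem hIconv hfc hinj hx₁ hy₁ ht
  obtain ⟨hG2, _⟩ := G_mem hIconv hfc hinj hx₂ hy₂ ht
  have hcombI : a * G f I t x₁ y₁ + b * G f I t x₂ y₂ ∈ I := by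
    have := hIconv hG1 hG2 ha hb hab; simpa [smul_eq_mul] using this
  have hGt_le : G f I t mx my ≤ a * G f I t x₁ y₁ + b * G f I t x₂ y₂ := by
    have := hct.2 (show ((x₁, y₁) : ℝ × ℝ) ∈ I ×ˢ I from ⟨hx₁, hy₁⟩)
      (show ((x₂, y₂) : ℝ × ℝ) ∈ I ×ˢ I from ⟨hx₂, hy₂⟩) ha hb hab
    simpa [smul_eq_mul] using this
  have step1 : G f I p (G f I t mx my) my ≤
      G f I p (a * G f I t x₁ y₁ + b * G f I t x₂ y₂) my :=
    G_mono₁ hIconv hfc hfm hp hGm hcombI hmy hGt_le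
  have step2 : G f I p (a * G f I t x₁ y₁ + b * G f I t x₂ y₂) my ≤
      a * G f I p (G f I t x₁ y₁) y₁ + b * G f I p (G f I t x₂ y₂) y₂ := by
    have := hcp.2 (show ((G f I t x₁ y₁, y₁) : ℝ × ℝ) ∈ I ×ˢ I from ⟨hG1, hy₁⟩)
      (show ((G f I t x₂ y₂, y₂) : ℝ × ℝ) ∈ I ×ˢ I from ⟨hG2, hy₂⟩) ha hb hab
    simpa [smul_eq_mul] using this
  have e0 := G_comp₁ hIconv hfc hinj (p := p) ht hmx hmy
  have e1 := G_comp₁ hIconv hfc hinj (p := p) ht hx₁ hy₁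
  have e2 := G_comp₁ hIconv hfc hinj (p := p) ht hx₂ hy₂
  rw [← e0, ← e1, ← e2]
  linarith

include hIconv hfc hfm in
lemma comp_conv₂ {p t : ℝ} (hp : p ∈ Icc (0:ℝ) 1) (ht : t ∈ Icc (0:ℝ) 1)
    (hcp : ConvexOn ℝ (I ×ˢ I) fun q : ℝ × ℝ => G f I p q.1 q.2)
    (hct : ConvexOn ℝ (I ×ˢ I) fun q : ℝ × ℝ => G f I t q.1 q.2) :
    ConvexOn ℝ (I ×ˢ I) fun q : ℝ × ℝ => G f I (p + (1 - p) * t) q.1 q.2 := by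
  have hinj := hinj_of hfm
  refine ⟨hIconv.prod hIconv, ?_⟩
  rintro ⟨x₁, y₁⟩ ⟨hx₁, hy₁⟩ ⟨x₂, y₂⟩ ⟨hx₂, hy₂⟩ a b ha hb hab
  simp only [Prod.smul_mk, Prod.mk_add_mk, smul_eq_mul]
  set mx := a * x₁ + b * x₂ with hmx_def
  set my := a * y₁ + b * y₂ with hmy_def
  have hmx : mx ∈ I := by
    have := hIconv hx₁ hx₂ ha hb hab; simpa [smul_eq_mul] using this
  have hmy : my ∈ I := by
    have := hIconv hy₁ hy₂ ha hb hab; simpa [smul_eq_mul] using this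
  obtain ⟨hGm, _⟩ := G_mem hIconv hfc hinj hmx hmy ht
  obtain ⟨hG1, _⟩ := G_mem hIconv hfc hinj hx₁ hy₁ ht
  obtain ⟨hG2, _⟩ := G_mem hIconv hfc hinj hx₂ hy₂ ht
  have hcombI : a * G f I t x₁ y₁ + b * G f I t x₂ y₂ ∈ I := by
    have := hIconv hG1 hG2 ha hb hab; simpa [smul_eq_mul] using this
  have hGt_le : G f I t mx my ≤ a * G f I t x₁ y₁ + b * G f I t x₂ y₂ := by
    have := hct.2 (show ((x₁, y₁) : ℝ × ℝ) ∈ I ×ˢ I from ⟨hx₁, hy₁⟩)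
      (show ((x₂, y₂) : ℝ × ℝ) ∈ I ×ˢ I from ⟨hx₂, hy₂⟩) ha hb hab
    simpa [smul_eq_mul] using this
  have step1 : G f I p mx (G f I t mx my) ≤
      G f I p mx (a * G f I t x₁ y₁ + b * G f I t x₂ y₂) :=
    G_mono₂ hIconv hfc hfm hp hmx hGm hcombI hGt_le
  have step2 : G f I p mx (a * G f I t x₁ y₁ + b * G f I t x₂ y₂) ≤
      a * G f I p x₁ (G f I t x₁ y₁) + b * G f I p x₂ (G f I t x₂ y₂) := by
    have := hcp.2 (show ((x₁, G f I t x₁ y₁) : ℝ × ℝ) ∈ I ×ˢ I from ⟨hx₁, hG1⟩)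
      (show ((x₂, G f I t x₂ y₂) : ℝ × ℝ) ∈ I ×ˢ I from ⟨hx₂, hG2⟩) ha hb hab
    simpa [smul_eq_mul] using this
  have e0 := G_comp₂ hIconv hfc hinj (p := p) ht hmx hmy
  have e1 := G_comp₂ hIconv hfc hinj (p := p) ht hx₁ hy₁
  have e2 := G_comp₂ hIconv hfc hinj (p := p) ht hx₂ hy₂
  rw [← e0, ← e1, ← e2]
  linarith

include hIconv hfc hfm in
lemma convexOn_G_all {p : ℝ} (hp : p ∈ Ioo (0:ℝ) 1)
    (hcp : ConvexOn ℝ (I ×ˢ I) fun q : ℝ × ℝ => G f I p q.1 q.2) :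
    ∀ t ∈ Icc (0:ℝ) 1, ConvexOn ℝ (I ×ˢ I) fun q : ℝ × ℝ => G f I t q.1 q.2 := by
  have hinj := hinj_of hfm
  have hpIcc : p ∈ Icc (0:ℝ) 1 := ⟨hp.1.le, hp.2.le⟩
  set S : Set ℝ := {t | t ∈ Icc (0:ℝ) 1 ∧ ConvexOn ℝ (I ×ˢ I) fun q : ℝ × ℝ => G f I t q.1 q.2}
    with hS_def
  have hOrbS : Orb p ⊆ S := by
    apply Orb_subset
    · exact ⟨hpIcc, hcp⟩
    · rintro t ⟨htIcc, htc⟩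
      refine ⟨⟨mul_nonneg hp.1.le htIcc.1, ?_⟩, comp_conv₁ hIconv hfc hfm hpIcc htIcc hcp htc⟩
      nlinarith [hp.2, htIcc.2, htIcc.1, hp.1]
    · rintro t ⟨htIcc, htc⟩
      refine ⟨⟨?_, ?_⟩, comp_conv₂ hIconv hfc hfm hpIcc htIcc hcp htc⟩
      · nlinarith [hp.1, htIcc.1, hp.2]
      · nlinarith [hp.1, hp.2, htIcc.1, htIcc.2]
  intro t ht
  refine ⟨hIconv.prod hIconv, ?_⟩
  rintro ⟨x₁, y₁⟩ ⟨hx₁, hy₁⟩ ⟨x₂, y₂⟩ ⟨hx₂, hy₂⟩ a b ha hb hab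
  simp only [Prod.smul_mk, Prod.mk_add_mk, smul_eq_mul]
  have hmx : a * x₁ + b * x₂ ∈ I := by
    have := hIconv hx₁ hx₂ ha hb hab; simpa [smul_eq_mul] using this
  have hmy : a * y₁ + b * y₂ ∈ I := by
    have := hIconv hy₁ hy₂ ha hb hab; simpa [smul_eq_mul] using this
  set h : ℝ → ℝ := fun u => a * G f I u x₁ y₁ + b * G f I u x₂ y₂
    - G f I u (a * x₁ + b * x₂) (a * y₁ + b * y₂) with hh_def
  have hcont : ContinuousOn h (Icc (0:ℝ) 1) := by
    apply ContinuousOn.sub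
    · exact ((contG hIconv hfc hinj hx₁ hy₁).const_smul a |>.add
        ((contG hIconv hfc hinj hx₂ hy₂).const_smul b))
    · exact contG hIconv hfc hinj hmx hmy
  have hnonneg : ∀ u ∈ S, 0 ≤ h u := by
    rintro u ⟨huIcc, huc⟩
    have := huc.2 (show ((x₁, y₁) : ℝ × ℝ) ∈ I ×ˢ I from ⟨hx₁, hy₁⟩)
      (show ((x₂, y₂) : ℝ × ℝ) ∈ I ×ˢ I from ⟨hx₂, hy₂⟩) ha hb hab
    simp only [Prod.smul_mk, Prod.mk_add_mk, smul_eq_mul] at this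
    simp only [hh_def]
    linarith
  have happrox := fun n => Orb_approx hp n t ht
  choose s hsO hsb using happrox
  have hsIcc : ∀ n, s n ∈ Icc (0:ℝ) 1 := fun n => Orb_sub_Icc hp (hsO n)
  have hc0 : (0:ℝ) ≤ max p (1 - p) := le_trans hp.1.le (le_max_left _ _)
  have hc1 : max p (1 - p) < 1 := by
    rw [max_lt_iff]
    exact ⟨hp.2, by linarith [hp.1]⟩
  have htends : Tendsto s atTop (nhds t) := by
    rw [tendsto_iff_dist_tendsto_zero]
    apply squeeze_zero (fun n => dist_nonneg)
      (fun n => ?_) (tendsto_pow_atTop_nhds_zero_of_lt_one hc0 hc1)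
    rw [Real.dist_eq, abs_sub_comm]
    exact hsb n
  have htendsW : Tendsto s atTop (nhdsWithin t (Icc (0:ℝ) 1)) := by
    rw [tendsto_nhdsWithin_iff]
    exact ⟨htends, Eventually.of_forall hsIcc⟩
  have hlim : Tendsto (h ∘ s) atTop (nhds (h t)) :=
    ((hcont t ht).tendsto).comp htendsW
  have hfinal : 0 ≤ h t :=
    ge_of_tendsto hlim (Eventually.of_forall fun n => hnonneg (s n) (hOrbS (hsO n)))
  simp only [hh_def] at hfinal
  linarith

end Comp

section Meas
variable {Ω : Type*} [MeasurableSpace Ω]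

lemma meas_comp {φ : Ω → ℝ} (hφ : Measurable φ) {K s : Set ℝ} (hKs : K ⊆ s)
    (hmem : ∀ ω, φ ω ∈ K) {h : ℝ → ℝ} (hh : ContinuousOn h s) :
    Measurable fun ω => h (φ ω) := by
  have : (fun ω => h (φ ω)) = (s.restrict h) ∘ (fun ω => (⟨φ ω, hKs (hmem ω)⟩ : s)) := rfl
  rw [this]
  exact (continuousOn_iff_continuous_restrict.mp hh).measurable.comp hφ.subtype_mk

lemma int_comp (P : Measure Ω) [IsProbabilityMeasure P] {φ : Ω → ℝ} (hφ : Measurable φ)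
    {K s : Set ℝ} (hKc : IsCompact K) (hKs : K ⊆ s) (hmem : ∀ ω, φ ω ∈ K)
    {h : ℝ → ℝ} (hh : ContinuousOn h s) :
    Integrable (fun ω => h (φ ω)) P := by
  obtain ⟨C, hC⟩ := hKc.exists_bound_of_continuousOn (hh.mono hKs)
  exact ⟨(meas_comp hφ hKs hmem hh).aestronglyMeasurable,
    HasFiniteIntegral.of_bounded (C := C) (ae_of_all _ fun ω => hC _ (hmem ω))⟩

lemma nonempty_of_prob (P : Measure Ω) [IsProbabilityMeasure P] : Nonempty Ω := by
  by_contra h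
  have huniv : (univ : Set Ω) = ∅ := by
    rw [Set.eq_empty_iff_forall_notMem]
    exact fun x _ => h ⟨x⟩
  have := measure_univ (μ := P)
  rw [huniv, measure_empty] at this
  exact one_ne_zero this.symm

lemma convex_memLc {s : Set ℝ} (hs : Convex ℝ s) :
    Convex ℝ {φ : Ω → ℝ | MemLc s φ} := by
  rintro φ₁ ⟨hm₁, K₁, hK₁s, hK₁c, hK₁mem⟩ φ₂ ⟨hm₂, K₂, hK₂s, hK₂c, hK₂mem⟩ a b ha hb hab
  refine ⟨(hm₁.const_smul a).add (hm₂.const_smul b),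
    (fun q : ℝ × ℝ => a * q.1 + b * q.2) '' (K₁ ×ˢ K₂), ?_, ?_, ?_⟩
  · rintro z ⟨⟨u, v⟩, ⟨hu, hv⟩, rfl⟩
    have := hs (hK₁s hu) (hK₂s hv) ha hb hab
    simpa [smul_eq_mul] using this
  · exact (hK₁c.prod hK₂c).image (by continuity)
  · intro ω
    exact ⟨(φ₁ ω, φ₂ ω), ⟨hK₁mem ω, hK₂mem ω⟩, by simp [smul_eq_mul]⟩

lemma int_ite (P : Measure Ω) [IsProbabilityMeasure P] {A : Set Ω} (hA : MeasurableSet A)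
    (u v : ℝ) :
    ∫ ω, (if ω ∈ A then u else v) ∂P = (P A).toReal * u + (1 - (P A).toReal) * v := by
  have heq : (fun ω => if ω ∈ A then u else v)
      = fun ω => A.indicator (fun _ => u - v) ω + v := by
    funext ω
    by_cases h : ω ∈ A <;> simp [h]
  rw [heq, integral_add ((integrable_const (u - v)).indicator hA) (integrable_const v),
    integral_indicator_const _ hA, integral_const]
  simp [measure_univ]
  rw [measureReal_def]
  ring

lemma pot_two {f : ℝ → ℝ} {I : Set ℝ} (P : Measure Ω) [IsProbabilityMeasure P]
    {A : Set Ω} (hA : MeasurableSet A) (x y : ℝ) :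
    fPotential P f I (fun ω => if ω ∈ A then x else y) = G f I (P A).toReal x y := by
  unfold fPotential G
  congr 1
  have heq : (fun ω => f (if ω ∈ A then x else y)) = fun ω => if ω ∈ A then f x else f y := by
    funext ω; by_cases h : ω ∈ A <;> simp [h]
  rw [heq, int_ite P hA]

lemma memLc_two {I : Set ℝ} {A : Set Ω} (hA : MeasurableSet A) {x y : ℝ}
    (hx : x ∈ I) (hy : y ∈ I) :
    MemLc I (fun ω => if ω ∈ A then x else y) := by
  refine ⟨Measurable.ite hA measurable_const measurable_const, {x, y}, ?_, ?_, ?_⟩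
  · intro z hz
    rcases hz with h | h
    · rwa [h]
    · rw [mem_singleton_iff] at h; rwa [h]
  · exact ((Set.finite_singleton y).insert x).isCompact
  · intro ω
    by_cases h : ω ∈ A <;> simp [h]

lemma extract {f : ℝ → ℝ} {I : Set ℝ} (P : Measure Ω) [IsProbabilityMeasure P]
    {A : Set Ω} (hA : MeasurableSet A) (hIconv : Convex ℝ I)
    (hconv : ConvexOn ℝ {φ : Ω → ℝ | MemLc I φ} (fPotential P f I)) :
    ConvexOn ℝ (I ×ˢ I) (fun q : ℝ × ℝ => G f I (P A).toReal q.1 q.2) := by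
  refine ⟨hIconv.prod hIconv, ?_⟩
  rintro ⟨x₁, y₁⟩ ⟨hx₁, hy₁⟩ ⟨x₂, y₂⟩ ⟨hx₂, hy₂⟩ a b ha hb hab
  have hsum : (a • (fun ω : Ω => if ω ∈ A then x₁ else y₁)
      + b • (fun ω : Ω => if ω ∈ A then x₂ else y₂))
      = fun ω : Ω => if ω ∈ A then a * x₁ + b * x₂ else a * y₁ + b * y₂ := by
    funext ω
    by_cases h : ω ∈ A <;> simp [h, smul_eq_mul]
  have key := hconv.2 (show _ ∈ {φ : Ω → ℝ | MemLc I φ} from memLc_two hA hx₁ hy₁)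
    (show _ ∈ {φ : Ω → ℝ | MemLc I φ} from memLc_two hA hx₂ hy₂) ha hb hab
  rw [hsum] at key
  rw [pot_two P hA, pot_two P hA, pot_two P hA] at key
  simpa [smul_eq_mul] using key

end Meas


theorem core {Ω : Type*} [MeasurableSpace Ω] (P : Measure Ω) [IsProbabilityMeasure P]
    (hP : ∃ A : Set Ω, MeasurableSet A ∧ 0 < P A ∧ P A < 1)
    {I : Set ℝ} (hIconv : Convex ℝ I)
    {f : ℝ → ℝ} (hfc : ContinuousOn f I)
    (hfm : StrictMonoOn f I ∨ StrictAntiOn f I)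
    (hconv : ConvexOn ℝ {φ : Ω → ℝ | MemLc I φ} (fPotential P f I)) :
    ConvexOn ℝ {φ : Ω → ℝ | MemLc (f '' I) φ} (fPotential P (invFunOn f I) (f '' I)) ∨
      ConcaveOn ℝ {φ : Ω → ℝ | MemLc (f '' I) φ} (fPotential P (invFunOn f I) (f '' I)) := by
  have hne : Nonempty Ω := nonempty_of_prob P
  have hinj : InjOn f I := hinj_of hfm
  obtain ⟨A, hA, hA0, hA1⟩ := hP
  have hAfin : P A ≠ ⊤ := (lt_of_lt_of_le hA1 le_top).ne
  have hp0 : (0:ℝ) < (P A).toReal := ENNReal.toReal_pos hA0.ne' hAfin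
  have hp1 : (P A).toReal < 1 := by
    have := ENNReal.toReal_strict_mono ENNReal.one_ne_top hA1
    simpa using this
  have hpIoo : (P A).toReal ∈ Ioo (0:ℝ) 1 := ⟨hp0, hp1⟩
  have hGp := extract P hA hIconv hconv
  have hGall := convexOn_G_all hIconv hfc hfm hpIoo hGp
  -- the key inequality
  have hkey : ∀ ψ₁, MemLc (f '' I) ψ₁ → ∀ ψ₂, MemLc (f '' I) ψ₂ →
      ∀ a b : ℝ, 0 ≤ a → 0 ≤ b → a + b = 1 →
      ∃ z z' : ℝ, z ∈ I ∧ z' ∈ I ∧ z' ≤ z ∧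
        fPotential P (invFunOn f I) (f '' I) (a • ψ₁ + b • ψ₂) = f z ∧
        a • fPotential P (invFunOn f I) (f '' I) ψ₁
          + b • fPotential P (invFunOn f I) (f '' I) ψ₂ = f z' := by
    rintro ψ₁ ⟨hmψ₁, K₁, hK₁, hK₁c, hK₁m⟩ ψ₂ ⟨hmψ₂, K₂, hK₂, hK₂c, hK₂m⟩ a b ha hb hab
    obtain ⟨ω₀⟩ := hne
    have hKc : IsCompact (K₁ ∪ K₂) := hK₁c.union hK₂c
    have hKI : K₁ ∪ K₂ ⊆ f '' I := union_subset hK₁ hK₂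
    have hKne : (K₁ ∪ K₂).Nonempty := ⟨ψ₁ ω₀, Or.inl (hK₁m ω₀)⟩
    obtain ⟨J, hJc, hJconv, hJcl, hJI, hKJ⟩ := exists_J hIconv hfc hKc hKne hKI
    have hgJ : ContinuousOn (invFunOn f I) (f '' J) := contOn_inv hfc hinj hJc hJI
    have hfJconv : Convex ℝ (f '' J) := image_convex hJconv (hfc.mono hJI)
    have hfJc : IsCompact (f '' J) := hJc.image_of_continuousOn (hfc.mono hJI)
    have hψ₁m : ∀ ω, ψ₁ ω ∈ f '' J := fun ω => hKJ (Or.inl (hK₁m ω))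
    have hψ₂m : ∀ ω, ψ₂ ω ∈ f '' J := fun ω => hKJ (Or.inr (hK₂m ω))
    have hval : ∀ y ∈ f '' J, invFunOn f I y ∈ J ∧ f (invFunOn f I y) = y :=
      fun y hy => inv_mem_of_mem_image hinj hJI hy
    have haIcc : a ∈ Icc (0:ℝ) 1 := ⟨ha, by linarith⟩
    have hb' : b = 1 - a := by linarith
    -- the transformed functions
    have ha₁J : ∀ ω, invFunOn f I (ψ₁ ω) ∈ J := fun ω => (hval _ (hψ₁m ω)).1
    have ha₂J : ∀ ω, invFunOn f I (ψ₂ ω) ∈ J := fun ω => (hval _ (hψ₂m ω)).1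
    have hia₁ : Integrable (fun ω => invFunOn f I (ψ₁ ω)) P :=
      int_comp P hmψ₁ hfJc (subset_refl _) hψ₁m hgJ
    have hia₂ : Integrable (fun ω => invFunOn f I (ψ₂ ω)) P :=
      int_comp P hmψ₂ hfJc (subset_refl _) hψ₂m hgJ
    set Ea₁ := ∫ ω, invFunOn f I (ψ₁ ω) ∂P with hEa₁_def
    set Ea₂ := ∫ ω, invFunOn f I (ψ₂ ω) ∂P with hEa₂_def
    have hEa₁ : Ea₁ ∈ J := hJconv.integral_mem hJcl (ae_of_all _ ha₁J) hia₁
    have hEa₂ : Ea₂ ∈ J := hJconv.integral_mem hJcl (ae_of_all _ ha₂J) hia₂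
    -- the mixture
    have hmixfun : (a • ψ₁ + b • ψ₂) = fun ω => a * ψ₁ ω + b * ψ₂ ω := by
      funext ω; simp [smul_eq_mul]
    have hmixm : ∀ ω, a * ψ₁ ω + b * ψ₂ ω ∈ f '' J := fun ω => by
      have := hfJconv (hψ₁m ω) (hψ₂m ω) ha hb hab
      simpa [smul_eq_mul] using this
    have hmixmeas : Measurable fun ω => a * ψ₁ ω + b * ψ₂ ω :=
      (hmψ₁.const_mul a).add (hmψ₂.const_mul b)
    have hint : Integrable (fun ω => invFunOn f I (a * ψ₁ ω + b * ψ₂ ω)) P :=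
      int_comp P hmixmeas hfJc (subset_refl _) hmixm hgJ
    set z := ∫ ω, invFunOn f I (a * ψ₁ ω + b * ψ₂ ω) ∂P with hz_def
    have hzJ : z ∈ J :=
      hJconv.integral_mem hJcl (ae_of_all _ fun ω => (hval _ (hmixm ω)).1) hint
    -- Jensen
    have hΦR : ConvexOn ℝ (J ×ˢ J) (fun q : ℝ × ℝ => G f I a q.1 q.2) :=
      (hGall a haIcc).subset (prod_mono hJI hJI) (hJconv.prod hJconv)
    have hΦcont : ContinuousOn (fun q : ℝ × ℝ => G f I a q.1 q.2) (J ×ˢ J) := by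
      have hinner : ContinuousOn (fun q : ℝ × ℝ => a * f q.1 + (1 - a) * f q.2) (J ×ˢ J) := by
        apply ContinuousOn.add
        · exact ContinuousOn.mul continuousOn_const
            ((hfc.mono hJI).comp continuousOn_fst (fun q hq => hq.1))
        · exact ContinuousOn.mul continuousOn_const
            ((hfc.mono hJI).comp continuousOn_snd (fun q hq => hq.2))
      exact hgJ.comp hinner (fun q hq =>
        comb_mem hfJconv (mem_image_of_mem f hq.1) (mem_image_of_mem f hq.2) haIcc)
    have hpair : Integrable (fun ω => (invFunOn f I (ψ₁ ω), invFunOn f I (ψ₂ ω))) P :=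
      hia₁.prodMk hia₂
    have hcomp_eq : ∀ ω, G f I a (invFunOn f I (ψ₁ ω)) (invFunOn f I (ψ₂ ω))
        = invFunOn f I (a * ψ₁ ω + b * ψ₂ ω) := by
      intro ω
      show invFunOn f I (a * f (invFunOn f I (ψ₁ ω)) + (1 - a) * f (invFunOn f I (ψ₂ ω))) = _
      rw [(hval _ (hψ₁m ω)).2, (hval _ (hψ₂m ω)).2, ← hb']
    have hgi : Integrable ((fun q : ℝ × ℝ => G f I a q.1 q.2)
        ∘ (fun ω => (invFunOn f I (ψ₁ ω), invFunOn f I (ψ₂ ω)))) P := by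
      have heq : ((fun q : ℝ × ℝ => G f I a q.1 q.2)
          ∘ (fun ω => (invFunOn f I (ψ₁ ω), invFunOn f I (ψ₂ ω))))
          = fun ω => invFunOn f I (a * ψ₁ ω + b * ψ₂ ω) := by
        funext ω; exact hcomp_eq ω
      rw [heq]
      exact hint
    have hjensen := hΦR.map_integral_le hΦcont (hJcl.prod hJcl)
      (ae_of_all _ fun ω => mem_prod.mpr ⟨ha₁J ω, ha₂J ω⟩) hpair hgi
    rw [integral_pair hia₁ hia₂] at hjensen
    have hRHS : (∫ ω, (fun q : ℝ × ℝ => G f I a q.1 q.2)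
        ((fun ω => (invFunOn f I (ψ₁ ω), invFunOn f I (ψ₂ ω))) ω) ∂P) = z := by
      rw [hz_def]
      congr 1
      funext ω
      exact hcomp_eq ω
    rw [hRHS] at hjensen
    -- hjensen : G f I a Ea₁ Ea₂ ≤ z
    obtain ⟨hz'I, hfz'⟩ := G_mem hIconv hfc hinj (hJI hEa₁) (hJI hEa₂) haIcc
    -- potentials
    have pot_mix : fPotential P (invFunOn f I) (f '' I) (a • ψ₁ + b • ψ₂) = f z := by
      unfold fPotential
      have : (∫ ω, invFunOn f I ((a • ψ₁ + b • ψ₂) ω) ∂P) = z := by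
        rw [hz_def]
        congr 1
      rw [this, invFunOn_invFunOn hinj (hJI hzJ)]
    have pot₁ : fPotential P (invFunOn f I) (f '' I) ψ₁ = f Ea₁ := by
      unfold fPotential
      rw [← hEa₁_def, invFunOn_invFunOn hinj (hJI hEa₁)]
    have pot₂ : fPotential P (invFunOn f I) (f '' I) ψ₂ = f Ea₂ := by
      unfold fPotential
      rw [← hEa₂_def, invFunOn_invFunOn hinj (hJI hEa₂)]
    refine ⟨z, G f I a Ea₁ Ea₂, hJI hzJ, hz'I, hjensen, pot_mix, ?_⟩
    rw [pot₁, pot₂, hfz', smul_eq_mul, smul_eq_mul, ← hb']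
  -- conclude
  rcases hfm with hmono | hanti
  · right
    refine ⟨convex_memLc (image_convex hIconv hfc), ?_⟩
    intro ψ₁ h₁ ψ₂ h₂ a b ha hb hab
    obtain ⟨z, z', hz, hz', hle, e1, e2⟩ := hkey ψ₁ h₁ ψ₂ h₂ a b ha hb hab
    rw [e1, e2]
    exact hmono.monotoneOn hz' hz hle
  · left
    refine ⟨convex_memLc (image_convex hIconv hfc), ?_⟩
    intro ψ₁ h₁ ψ₂ h₂ a b ha hb hab
    obtain ⟨z, z', hz, hz', hle, e1, e2⟩ := hkey ψ₁ h₁ ψ₂ h₂ a b ha hb hab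
    rw [e1, e2]
    exact hanti.antitoneOn hz' hz hle


lemma convexOn_congr {E : Type*} [AddCommMonoid E] [Module ℝ E] {s : Set E} {F G : E → ℝ}
    (h : ConvexOn ℝ s F) (he : ∀ x ∈ s, F x = G x) : ConvexOn ℝ s G :=
  ⟨h.1, fun x hx y hy a b ha hb hab => by
    rw [← he _ hx, ← he _ hy, ← he _ (h.1 hx hy ha hb hab)]
    exact h.2 hx hy ha hb hab⟩

lemma concaveOn_congr {E : Type*} [AddCommMonoid E] [Module ℝ E] {s : Set E} {F G : E → ℝ}
    (h : ConcaveOn ℝ s F) (he : ∀ x ∈ s, F x = G x) : ConcaveOn ℝ s G :=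
  ⟨h.1, fun x hx y hy a b ha hb hab => by
    rw [← he _ hx, ← he _ hy, ← he _ (h.1 hx hy ha hb hab)]
    exact h.2 hx hy ha hb hab⟩

variable {I : Set ℝ} {f : ℝ → ℝ}

lemma memLc_neg {Ω : Type*} [MeasurableSpace Ω] {s : Set ℝ} {φ : Ω → ℝ}
    (h : MemLc s φ) : MemLc (-s) (-φ) := by
  obtain ⟨hm, K, hKs, hKc, hKm⟩ := h
  refine ⟨hm.neg, -K, ?_, hKc.neg, ?_⟩
  · intro x hx
    rw [Set.mem_neg] at hx ⊢
    exact hKs hx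
  · intro ω
    rw [Set.mem_neg]
    simpa using hKm ω

lemma int_mem_image {Ω : Type*} [MeasurableSpace Ω] (P : Measure Ω) [IsProbabilityMeasure P]
    (hIconv : Convex ℝ I) (hfc : ContinuousOn f I) {φ : Ω → ℝ} (h : MemLc I φ) :
    (∫ ω, f (φ ω) ∂P) ∈ f '' I := by
  have hne : Nonempty Ω := nonempty_of_prob P
  obtain ⟨ω₀⟩ := hne
  obtain ⟨hm, K, hKI, hKc, hKm⟩ := h
  have hK₀c : IsCompact (f '' K) := hKc.image_of_continuousOn (hfc.mono hKI)
  have hK₀I : f '' K ⊆ f '' I := image_mono (f := f) hKI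
  have hK₀ne : (f '' K).Nonempty := ⟨f (φ ω₀), mem_image_of_mem f (hKm ω₀)⟩
  obtain ⟨J, hJc, hJconv, hJcl, hJI, hKJ⟩ := exists_J hIconv hfc hK₀c hK₀ne hK₀I
  have hint : Integrable (fun ω => f (φ ω)) P := int_comp P hm hKc hKI hKm hfc
  have hfJc : IsCompact (f '' J) := hJc.image_of_continuousOn (hfc.mono hJI)
  have hmem : (∫ ω, f (φ ω) ∂P) ∈ f '' J :=
    (image_convex hJconv (hfc.mono hJI)).integral_mem hfJc.isClosed
      (ae_of_all _ fun ω => hKJ (mem_image_of_mem f (hKm ω))) hint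
  exact image_mono (f := f) hJI hmem

lemma inv_reflect (hinj : InjOn f I) {w : ℝ} (hw : w ∈ f '' I) :
    invFunOn (fun x => f (-x)) (-I) w = - invFunOn f I w := by
  obtain ⟨hgI, hgw⟩ := inv_mem_of_mem_image hinj (subset_refl I) hw
  have hex : ∃ u ∈ -I, (fun x => f (-x)) u = w := by
    refine ⟨-invFunOn f I w, ?_, ?_⟩
    · rw [Set.mem_neg, neg_neg]; exact hgI
    · simpa using hgw
  have hu := Function.invFunOn_mem hex
  have he := Function.invFunOn_eq hex
  rw [Set.mem_neg] at hu
  have : -invFunOn (fun x => f (-x)) (-I) w = invFunOn f I w := by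
    apply hinj hu hgI
    rw [hgw]
    exact he
  linarith [this]

lemma pot_reflect {Ω : Type*} [MeasurableSpace Ω] (P : Measure Ω) [IsProbabilityMeasure P]
    (hIconv : Convex ℝ I) (hfc : ContinuousOn f I) (hinj : InjOn f I)
    {φ : Ω → ℝ} (h : MemLc (-I) φ) :
    fPotential P (fun x => f (-x)) (-I) φ = - fPotential P f I (-φ) := by
  have hφ' : MemLc I (-φ) := by
    have := memLc_neg h
    rwa [neg_neg] at this
  have hw : (∫ ω, f ((-φ) ω) ∂P) ∈ f '' I := int_mem_image P hIconv hfc hφ'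
  unfold fPotential
  have heq : (∫ ω, f (-(φ ω)) ∂P) = ∫ ω, f ((-φ) ω) ∂P := by
    congr 1
  rw [heq, inv_reflect hinj hw]


lemma pot_agree {Ω : Type*} [MeasurableSpace Ω] (P : Measure Ω) [IsProbabilityMeasure P]
    (hIconv : Convex ℝ I) (hfc : ContinuousOn f I) (hinj : InjOn f I)
    {ψ : Ω → ℝ} (h : MemLc (f '' I) ψ) :
    fPotential P (invFunOn (fun x => f (-x)) (-I)) (f '' I) ψ
      = fPotential P (invFunOn f I) (f '' I) ψ := by
  obtain ⟨ω₀⟩ : Nonempty Ω := nonempty_of_prob P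
  obtain ⟨hm, K, hKfI, hKc, hKm⟩ := h
  have hKne : K.Nonempty := ⟨ψ ω₀, hKm ω₀⟩
  obtain ⟨J, hJc, hJconv, hJcl, hJI, hKJ⟩ := exists_J hIconv hfc hKc hKne hKfI
  have hgJ : ContinuousOn (invFunOn f I) (f '' J) := contOn_inv hfc hinj hJc hJI
  have hval : ∀ y ∈ f '' J, invFunOn f I y ∈ J ∧ f (invFunOn f I y) = y :=
    fun y hy => inv_mem_of_mem_image hinj hJI hy
  have hint : Integrable (fun ω => invFunOn f I (ψ ω)) P :=
    int_comp P hm hKc hKJ hKm hgJ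
  set z := ∫ ω, invFunOn f I (ψ ω) ∂P with hz_def
  have hzJ : z ∈ J :=
    hJconv.integral_mem hJcl (ae_of_all _ fun ω => (hval _ (hKJ (hKm ω))).1) hint
  have hzI : z ∈ I := hJI hzJ
  have hptw : (fun ω => invFunOn (fun x => f (-x)) (-I) (ψ ω))
      = fun ω => -(invFunOn f I (ψ ω)) :=
    funext fun ω => inv_reflect hinj (hKfI (hKm ω))
  unfold fPotential
  rw [hptw, integral_neg, ← hz_def, invFunOn_invFunOn hinj hzI]
  -- goal : invFunOn (invFunOn (fun x => f (-x)) (-I)) (f '' I) (-z) = f z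
  have hex : ∃ y ∈ f '' I, invFunOn (fun x => f (-x)) (-I) y = -z :=
    ⟨f z, mem_image_of_mem f hzI, by
      rw [inv_reflect hinj (mem_image_of_mem f hzI), invFunOn_eq_self hinj hzI]⟩
  have hu := Function.invFunOn_mem hex
  have he := Function.invFunOn_eq hex
  rw [inv_reflect hinj hu] at he
  have h2 : invFunOn f I (invFunOn (invFunOn (fun x => f (-x)) (-I)) (f '' I) (-z)) = z := by
    linarith [he]
  obtain ⟨hq1, hq2⟩ := inv_mem_of_mem_image hinj (subset_refl I) hu
  conv_lhs => rw [← hq2]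
  rw [h2]

end IPaux

open IPaux in
theorem inverse_potential_convex_or_concave
    {Ω : Type*} [MeasurableSpace Ω] (P : Measure Ω) [IsProbabilityMeasure P]
    (hP : ∃ A : Set Ω, MeasurableSet A ∧ 0 < P A ∧ P A < 1)
    (I : Set ℝ) (hIconv : Convex ℝ I)
    (f : ℝ → ℝ) (hfc : ContinuousOn f I)
    (hfm : StrictMonoOn f I ∨ StrictAntiOn f I)
    (g : ℝ → ℝ) (hg : g = Function.invFunOn f I)
    (hconc : ConvexOn ℝ {φ : Ω → ℝ | MemLc I φ} (fPotential P f I) ∨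
      ConcaveOn ℝ {φ : Ω → ℝ | MemLc I φ} (fPotential P f I)) :
    ConvexOn ℝ {φ : Ω → ℝ | MemLc (f '' I) φ} (fPotential P g (f '' I)) ∨
      ConcaveOn ℝ {φ : Ω → ℝ | MemLc (f '' I) φ} (fPotential P g (f '' I)) := by
  subst hg
  have hinj : InjOn f I := hinj_of hfm
  rcases hconc with hconv | hconcave
  · exact core P hP hIconv hfc hfm hconv
  · -- reflection: apply `core` to x ↦ f (-x) on -I
    set f' : ℝ → ℝ := fun x => f (-x) with hf'_def
    have hI'conv : Convex ℝ (-I) := hIconv.neg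
    have hf'c : ContinuousOn f' (-I) := by
      apply hfc.comp continuous_neg.continuousOn
      intro x hx
      rwa [Set.mem_neg] at hx
    have hf'm : StrictMonoOn f' (-I) ∨ StrictAntiOn f' (-I) := by
      rcases hfm with h | h
      · right
        intro x hx y hy hxy
        exact h (by rwa [Set.mem_neg] at hy) (by rwa [Set.mem_neg] at hx) (by linarith)
      · left
        intro x hx y hy hxy
        exact h (by rwa [Set.mem_neg] at hy) (by rwa [Set.mem_neg] at hx) (by linarith)
    have hconv' : ConvexOn ℝ {φ : Ω → ℝ | MemLc (-I) φ} (fPotential P f' (-I)) := by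
      refine ⟨convex_memLc hI'conv, ?_⟩
      intro φ₁ h₁ φ₂ h₂ a b ha hb hab
      have h₁' : MemLc I (-φ₁) := by have := memLc_neg h₁; rwa [neg_neg] at this
      have h₂' : MemLc I (-φ₂) := by have := memLc_neg h₂; rwa [neg_neg] at this
      have hmix : MemLc (-I) (a • φ₁ + b • φ₂) := convex_memLc hI'conv h₁ h₂ ha hb hab
      have e₁ := pot_reflect P hIconv hfc hinj h₁
      have e₂ := pot_reflect P hIconv hfc hinj h₂
      have e₃ := pot_reflect P hIconv hfc hinj hmix
      have hnegmix : -(a • φ₁ + b • φ₂) = a • (-φ₁) + b • (-φ₂) := by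
        funext ω
        simp [smul_eq_mul]
        ring
      rw [hnegmix] at e₃
      have hc := hconcave.2 (show _ ∈ {φ : Ω → ℝ | MemLc I φ} from h₁')
        (show _ ∈ {φ : Ω → ℝ | MemLc I φ} from h₂') ha hb hab
      rw [e₁, e₂, e₃]
      simp only [smul_eq_mul] at hc ⊢
      linarith
    have hres := core P hP hI'conv hf'c hf'm hconv'
    have himg : f' '' (-I) = f '' I := by
      ext w
      constructor
      · rintro ⟨x, hx, rfl⟩
        rw [Set.mem_neg] at hx
        exact ⟨-x, hx, rfl⟩
      · rintro ⟨y, hy, rfl⟩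
        exact ⟨-y, by rwa [Set.mem_neg, neg_neg], by simp [hf'_def]⟩
    rw [himg] at hres
    rcases hres with h | h
    · left
      exact convexOn_congr h (fun ψ hψ => pot_agree P hIconv hfc hinj hψ)
    · right
      exact concaveOn_congr h (fun ψ hψ => pot_agree P hIconv hfc hinj hψ)
end

section
/- Let I ⊆ ℝ be an open interval and let f : ℝ → ℝ be twice continuously differentiable, strictly increasing and convex on I. Assume that at least one of the following two sets is convex: the set {(x,t) ∈ ℝ × ℝ : x ∈ I ∧ t·f''(x) ≤ f'(x)} (the hypograph of h(x) = f'(x)/f''(x) ∈ (0,+∞]) or the set {(y,t) ∈ ℝ × ℝ : ∃ x ∈ I, y = f(x) ∧ t·f''(x) ≤ (f'(x))²} (the hypograph of H with H(f(x)) = f'(x)²/f''(x) ∈ (0,+∞]). Then there is an alternative: either f''(x) ≠ 0 for all x ∈ I, or f''(x) = 0 for all x ∈ I. -/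
open Set Filter Topology

private lemma aux_deriv_nonneg {I : Set ℝ} (hIopen : IsOpen I) {g : ℝ → ℝ}
    (hg : MonotoneOn g I) {x : ℝ} (hx : x ∈ I) (hd : DifferentiableAt ℝ g x) :
    0 ≤ deriv g x := by
  have h := hasDerivAt_iff_tendsto_slope.mp hd.hasDerivAt
  refine ge_of_tendsto h ?_
  filter_upwards [self_mem_nhdsWithin,
    eventually_nhdsWithin_of_eventually_nhds (hIopen.eventually_mem hx)] with y hy hyI
  have hyx : y ≠ x := hy
  rw [slope_def_field]
  rcases hyx.lt_or_gt with h1 | h1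
  · have : g x - g y ≥ 0 := by have := hg hyI hx h1.le; linarith
    have h2 : x - y > 0 := by linarith
    have := div_nonneg this h2.le
    rw [show g x - g y = -(g y - g x) by ring, show x - y = -(y - x) by ring,
      neg_div_neg_eq] at this
    exact this
  · exact div_nonneg (by have := hg hx hyI h1.le; linarith) (by linarith)

theorem second_derivative_alternative
    (I : Set ℝ) (hIopen : IsOpen I) (hIconv : Convex ℝ I)
    (f : ℝ → ℝ) (hf : ContDiffOn ℝ 2 f I)
    (hmono : StrictMonoOn f I) (hconv : ConvexOn ℝ I f)
    (hhyp : Convex ℝ {p : ℝ × ℝ | p.1 ∈ I ∧ p.2 * deriv (deriv f) p.1 ≤ deriv f p.1} ∨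
      Convex ℝ {p : ℝ × ℝ |
        ∃ x ∈ I, p.1 = f x ∧ p.2 * deriv (deriv f) x ≤ (deriv f x) ^ 2}) :
    (∀ x ∈ I, deriv (deriv f) x ≠ 0) ∨ (∀ x ∈ I, deriv (deriv f) x = 0) := by
  by_contra hcon
  push_neg at hcon
  obtain ⟨⟨a, haI, ha⟩, b, hbI, hb⟩ := hcon
  -- basic differentiability facts
  have hdf : DifferentiableOn ℝ f I := hf.differentiableOn (by norm_num)
  have hf1 : ContDiffOn ℝ 1 (deriv f) I :=
    hf.deriv_of_isOpen hIopen (by norm_num)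
  have hdf' : DifferentiableOn ℝ (deriv f) I := hf1.differentiableOn (by norm_num)
  have hcont2 : ContinuousOn (deriv (deriv f)) I :=
    hf1.continuousOn_deriv_of_isOpen hIopen le_rfl
  have dAt : ∀ x ∈ I, DifferentiableAt ℝ f x := fun x hx =>
    (hdf x hx).differentiableAt (hIopen.mem_nhds hx)
  have dAt' : ∀ x ∈ I, DifferentiableAt ℝ (deriv f) x := fun x hx =>
    (hdf' x hx).differentiableAt (hIopen.mem_nhds hx)
  -- f' monotone on I
  have hmonf' : MonotoneOn (deriv f) I := by
    intro x hx y hy hxy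
    rcases eq_or_lt_of_le hxy with rfl | h
    · exact le_rfl
    · exact (hconv.deriv_le_slope hx hy h (dAt x hx)).trans
        (hconv.slope_le_deriv hx hy h (dAt y hy))
  have hf'nonneg : ∀ x ∈ I, 0 ≤ deriv f x := fun x hx =>
    aux_deriv_nonneg hIopen hmono.monotoneOn hx (dAt x hx)
  have hf''nonneg : ∀ x ∈ I, 0 ≤ deriv (deriv f) x := fun x hx =>
    aux_deriv_nonneg hIopen hmonf' hx (dAt' x hx)
  have hbpos : 0 < deriv (deriv f) b := lt_of_le_of_ne (hf''nonneg b hbI) (Ne.symm hb)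
  -- key step: from either convexity assumption, any zero c of f'' (c ≠ b) produces a
  -- zero of f'' strictly closer to b, inside uIcc c b.
  have key : ∀ c ∈ I, deriv (deriv f) c = 0 → c ≠ b →
      ∃ x ∈ I, x ∈ uIcc c b ∧ deriv (deriv f) x = 0 ∧ |x - b| < |c - b| := by
    intro c hcI hc hne
    rcases hhyp with hS | hS
    · -- hypograph of f'/f'' convex
      set t0 : ℝ := deriv f b / deriv (deriv f) b with ht0
      set x : ℝ := (c + b) / 2 with hxdef
      have hxI : x ∈ I := by
        have := hIconv hcI hbI (by norm_num : (0:ℝ) ≤ 1/2) (by norm_num : (0:ℝ) ≤ 1/2)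
          (by norm_num)
        simpa [hxdef, smul_eq_mul] using by
          rw [show (c + b) / 2 = (1/2 : ℝ) * c + (1/2 : ℝ) * b by ring]; exact this
      have hall : ∀ s : ℝ, s * deriv (deriv f) x ≤ deriv f x := by
        intro s
        have hp : ((c, 2*s - t0) : ℝ × ℝ) ∈
            {p : ℝ × ℝ | p.1 ∈ I ∧ p.2 * deriv (deriv f) p.1 ≤ deriv f p.1} := by
          refine ⟨hcI, ?_⟩
          simp only [hc, mul_zero]
          exact hf'nonneg c hcI
        have hq : ((b, t0) : ℝ × ℝ) ∈
            {p : ℝ × ℝ | p.1 ∈ I ∧ p.2 * deriv (deriv f) p.1 ≤ deriv f p.1} := by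
          refine ⟨hbI, ?_⟩
          rw [ht0, div_mul_cancel₀ _ hbpos.ne']
        have := hS hp hq (by norm_num : (0:ℝ) ≤ 1/2) (by norm_num : (0:ℝ) ≤ 1/2)
          (by norm_num)
        simp only [Prod.smul_mk, Prod.mk_add_mk, smul_eq_mul, Set.mem_setOf_eq] at this
        obtain ⟨-, hle⟩ := this
        have e1 : (1/2 : ℝ) * c + (1/2 : ℝ) * b = x := by rw [hxdef]; ring
        have e2 : (1/2 : ℝ) * (2*s - t0) + (1/2 : ℝ) * t0 = s := by ring
        rwa [e1, e2] at hle
      have hx0 : deriv (deriv f) x = 0 := by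
        refine le_antisymm ?_ (hf''nonneg x hxI)
        by_contra h
        push_neg at h
        have := hall ((deriv f x + 1) / deriv (deriv f) x)
        rw [div_mul_cancel₀ _ h.ne'] at this
        linarith
      refine ⟨x, hxI, ?_, hx0, ?_⟩
      · rcases hne.lt_or_gt with h1 | h1
        · rw [uIcc_of_le h1.le]; constructor <;> [skip; skip] <;>
            simp [hxdef] <;> linarith
        · rw [uIcc_of_ge h1.le]; constructor <;> [skip; skip] <;>
            simp [hxdef] <;> linarith
      · rcases hne.lt_or_gt with h1 | h1
        · rw [abs_sub_comm x b, abs_sub_comm c b,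
            abs_of_pos (by rw [hxdef]; linarith), abs_of_pos (by linarith)]
          rw [hxdef]; linarith
        · rw [abs_of_pos (by rw [hxdef]; linarith), abs_of_pos (by linarith)]
          rw [hxdef]; linarith
    · -- hypograph of H convex
      set t0 : ℝ := (deriv f b) ^ 2 / deriv (deriv f) b with ht0
      have hq : ((f b, t0) : ℝ × ℝ) ∈
          {p : ℝ × ℝ | ∃ x ∈ I, p.1 = f x ∧ p.2 * deriv (deriv f) x ≤ (deriv f x) ^ 2} := by
        exact ⟨b, hbI, rfl, by rw [ht0, div_mul_cancel₀ _ hbpos.ne']⟩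
      have hmem : ∀ s : ℝ, ((f c + f b) / 2, s) ∈
          {p : ℝ × ℝ | ∃ x ∈ I, p.1 = f x ∧ p.2 * deriv (deriv f) x ≤ (deriv f x) ^ 2} := by
        intro s
        have hp : ((f c, 2*s - t0) : ℝ × ℝ) ∈
            {p : ℝ × ℝ | ∃ x ∈ I, p.1 = f x ∧ p.2 * deriv (deriv f) x ≤ (deriv f x) ^ 2} :=
          ⟨c, hcI, rfl, by rw [hc, mul_zero]; positivity⟩
        have := hS hp hq (by norm_num : (0:ℝ) ≤ 1/2) (by norm_num : (0:ℝ) ≤ 1/2)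
          (by norm_num)
        simp only [Prod.smul_mk, Prod.mk_add_mk, smul_eq_mul] at this
        have e1 : (1/2 : ℝ) * f c + (1/2 : ℝ) * f b = (f c + f b) / 2 := by ring
        have e2 : (1/2 : ℝ) * (2*s - t0) + (1/2 : ℝ) * t0 = s := by ring
        rwa [e1, e2] at this
      obtain ⟨x, hxI, hxeq, -⟩ := hmem 0
      have hall : ∀ s : ℝ, s * deriv (deriv f) x ≤ (deriv f x) ^ 2 := by
        intro s
        obtain ⟨x', hx'I, hx'eq, hle⟩ := hmem s
        have : x' = x := hmono.injOn hx'I hxI (by rw [← hx'eq, ← hxeq])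
        rwa [this] at hle
      have hx0 : deriv (deriv f) x = 0 := by
        refine le_antisymm ?_ (hf''nonneg x hxI)
        by_contra h
        push_neg at h
        have := hall (((deriv f x) ^ 2 + 1) / deriv (deriv f) x)
        rw [div_mul_cancel₀ _ h.ne'] at this
        linarith
      have hfx : f x = (f c + f b) / 2 := hxeq.symm
      refine ⟨x, hxI, ?_, hx0, ?_⟩
      · rcases hne.lt_or_gt with h1 | h1
        · have hfcb : f c < f b := hmono hcI hbI h1
          have h2 : c < x := (hmono.lt_iff_lt hcI hxI).mp (by rw [hfx]; linarith)
          have h3 : x < b := (hmono.lt_iff_lt hxI hbI).mp (by rw [hfx]; linarith)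
          rw [uIcc_of_le h1.le]; exact ⟨h2.le, h3.le⟩
        · have hfcb : f b < f c := hmono hbI hcI h1
          have h2 : x < c := (hmono.lt_iff_lt hxI hcI).mp (by rw [hfx]; linarith)
          have h3 : b < x := (hmono.lt_iff_lt hbI hxI).mp (by rw [hfx]; linarith)
          rw [uIcc_of_ge h1.le]; exact ⟨h3.le, h2.le⟩
      · rcases hne.lt_or_gt with h1 | h1
        · have hfcb : f c < f b := hmono hcI hbI h1
          have h2 : c < x := (hmono.lt_iff_lt hcI hxI).mp (by rw [hfx]; linarith)
          have h3 : x < b := (hmono.lt_iff_lt hxI hbI).mp (by rw [hfx]; linarith)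
          rw [abs_sub_comm x b, abs_sub_comm c b,
            abs_of_pos (by linarith), abs_of_pos (by linarith)]
          linarith
        · have hfcb : f b < f c := hmono hbI hcI h1
          have h2 : x < c := (hmono.lt_iff_lt hxI hcI).mp (by rw [hfx]; linarith)
          have h3 : b < x := (hmono.lt_iff_lt hbI hxI).mp (by rw [hfx]; linarith)
          rw [abs_of_pos (by linarith), abs_of_pos (by linarith)]
          linarith
  -- closing argument: minimize |x - b| over zeros of f'' in uIcc a b
  have hsub : uIcc a b ⊆ I := hIconv.ordConnected.uIcc_subset haI hbI
  set Z : Set ℝ := {x ∈ uIcc a b | deriv (deriv f) x = 0} with hZ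
  have haZ : a ∈ Z := ⟨left_mem_uIcc, ha⟩
  have hZclosed : IsClosed Z := by
    have : ContinuousOn (deriv (deriv f)) (uIcc a b) := hcont2.mono hsub
    exact this.preimage_isClosed_of_isClosed (by rw [uIcc]; exact isClosed_Icc) isClosed_singleton
  have hZcomp : IsCompact Z := isCompact_uIcc.of_isClosed_subset hZclosed (sep_subset _ _)
  obtain ⟨c, hcZ, hcmin⟩ := hZcomp.exists_isMinOn ⟨a, haZ⟩
    ((continuous_abs.comp (continuous_sub_right b)).continuousOn)
  obtain ⟨hcuIcc, hc0⟩ := hcZ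
  have hcI : c ∈ I := hsub hcuIcc
  have hcb : c ≠ b := fun h => hb (h ▸ hc0)
  obtain ⟨x, hxI, hxu, hx0, hxlt⟩ := key c hcI hc0 hcb
  have hxZ : x ∈ Z := ⟨uIcc_subset_uIcc hcuIcc right_mem_uIcc hxu, hx0⟩
  have := hcmin hxZ
  simp only [Function.comp] at this
  exact absurd hxlt (not_lt.mpr this)
end

section
/- Let I ⊆ ℝ be an open interval and let f : ℝ → ℝ be twice continuously differentiable and strictly monotone on I with f''(x) ≠ 0 for all x ∈ I. Let g be the inverse of the restriction of f to I, define h : I → ℝ by h(x) = f'(x)/f''(x) and H : f(I) → ℝ by H(y) = f'(g(y))²/f''(g(y)) (so that H(f(x)) = f'(x)²/f''(x) for x ∈ I). Then: if f is strictly increasing on I, h is convex (respectively concave) on I if and only if H is convex (respectively concave) on f(I); and if f is strictly decreasing on I, h is convex (respectively concave) on I if and only if H is concave (respectively convex) on f(I). -/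
open Set Filter Topology

private lemma affine_convexOn {s : Set ℝ} (hs : Convex ℝ s) (c d e : ℝ) :
    ConvexOn ℝ s (fun x => c + d * (x - e)) := by
  refine ⟨hs, fun x hx y hy a b ha hb hab => le_of_eq ?_⟩
  simp only [smul_eq_mul]
  linear_combination (d * e - c) * hab

private lemma supline_convexOn {s : Set ℝ} {H : ℝ → ℝ} (hs : Convex ℝ s)
    (hl : ∀ y0 ∈ s, ∃ M, ∀ y ∈ s, H y0 + M * (y - y0) ≤ H y) : ConvexOn ℝ s H := by
  refine ⟨hs, fun y1 hy1 y2 hy2 a b ha hb hab => ?_⟩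
  set y := a • y1 + b • y2 with hydef
  have hy : y ∈ s := hs hy1 hy2 ha hb hab
  obtain ⟨M, hM⟩ := hl y hy
  have h1 := hM y1 hy1
  have h2 := hM y2 hy2
  have hy' : a * y1 + b * y2 = y := by simp [hydef, smul_eq_mul]
  have := add_le_add (mul_le_mul_of_nonneg_left h1 ha) (mul_le_mul_of_nonneg_left h2 hb)
  have hkey : a * (H y + M * (y1 - y)) + b * (H y + M * (y2 - y)) = H y := by
    linear_combination (H y - M * y) * hab + M * hy'
  simp only [smul_eq_mul]
  linarith

private lemma exists_subgradient {s : Set ℝ} {h : ℝ → ℝ} (hso : IsOpen s)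
    (hh : ConvexOn ℝ s h) {x0 : ℝ} (hx0 : x0 ∈ s) :
    ∃ m, ∀ x ∈ s, h x0 + m * (x - x0) ≤ h x := by
  obtain ⟨ε, hε, hball⟩ := Metric.isOpen_iff.1 hso x0 hx0
  have hmem : ∀ t : ℝ, |t - x0| < ε → t ∈ s := by
    intro t ht
    exact hball (by simpa [Metric.mem_ball, Real.dist_eq] using ht)
  have ha : x0 - ε / 2 ∈ s := hmem _ (by rw [abs_of_nonpos (by linarith)]; linarith)
  have hb : x0 + ε / 2 ∈ s := hmem _ (by rw [abs_of_nonneg (by linarith)]; linarith)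
  set S : Set ℝ := {r | ∃ u ∈ s, u < x0 ∧ r = (h x0 - h u) / (x0 - u)} with hS
  have hSne : S.Nonempty := ⟨_, x0 - ε / 2, ha, by linarith, rfl⟩
  have hSbdd : BddAbove S := by
    refine ⟨(h (x0 + ε / 2) - h x0) / (x0 + ε / 2 - x0), ?_⟩
    rintro r ⟨u, hu, hux0, rfl⟩
    exact hh.slope_mono_adjacent hu hb hux0 (by linarith)
  refine ⟨sSup S, fun x hx => ?_⟩
  rcases lt_trichotomy x x0 with hlt | heq | hgt
  · have hmem' : (h x0 - h x) / (x0 - x) ∈ S := ⟨x, hx, hlt, rfl⟩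
    have := le_csSup hSbdd hmem'
    have hpos : (0:ℝ) < x0 - x := by linarith
    rw [div_le_iff₀ hpos] at this
    nlinarith
  · simp [heq]
  · have hub : sSup S ≤ (h x - h x0) / (x - x0) := by
      refine csSup_le hSne ?_
      rintro r ⟨u, hu, hux0, rfl⟩
      exact hh.slope_mono_adjacent hu hx hux0 hgt
    have hpos : (0:ℝ) < x - x0 := by linarith
    rw [le_div_iff₀ hpos] at hub
    nlinarith

private lemma sign_dichotomy {s : Set ℝ} (hs : Convex ℝ s) {w : ℝ → ℝ}
    (hc : ContinuousOn w s) (hne : ∀ x ∈ s, w x ≠ 0) :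
    (∀ x ∈ s, 0 < w x) ∨ (∀ x ∈ s, w x < 0) := by
  by_contra hcon
  push_neg at hcon
  obtain ⟨⟨a, ha, ha'⟩, b, hb, hb'⟩ := hcon
  have ha2 : w a < 0 := lt_of_le_of_ne ha' (hne a ha)
  have hb2 : 0 < w b := lt_of_le_of_ne hb' (Ne.symm (hne b hb))
  have hsub : uIcc a b ⊆ s := hs.ordConnected.uIcc_subset ha hb
  have h0 : (0:ℝ) ∈ uIcc (w a) (w b) := by
    rw [Set.mem_uIcc]; left; exact ⟨ha2.le, hb2.le⟩
  obtain ⟨c, hc1, hc2⟩ := intermediate_value_uIcc (hc.mono hsub) h0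
  exact hne c (hsub hc1) hc2

private lemma le_of_hasDerivAt_nonneg {u u' : ℝ → ℝ} {a b : ℝ} (hab : a ≤ b)
    (hu : ∀ t ∈ Icc a b, HasDerivAt u (u' t) t) (h0 : ∀ t ∈ Icc a b, 0 ≤ u' t) :
    u a ≤ u b := by
  have hmono := monotoneOn_of_deriv_nonneg (convex_Icc a b)
    (fun t ht => (hu t ht).continuousAt.continuousWithinAt)
    (fun t ht => ((hu t (interior_subset ht)).differentiableAt).differentiableWithinAt)
    (fun t ht => by
      rw [(hu t (interior_subset ht)).deriv]; exact h0 t (interior_subset ht))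
  exact hmono (left_mem_Icc.2 hab) (right_mem_Icc.2 hab) hab

private lemma le_of_hasDerivAt_nonpos {u u' : ℝ → ℝ} {a b : ℝ} (hab : a ≤ b)
    (hu : ∀ t ∈ Icc a b, HasDerivAt u (u' t) t) (h0 : ∀ t ∈ Icc a b, u' t ≤ 0) :
    u b ≤ u a := by
  have := le_of_hasDerivAt_nonneg (u := fun t => -u t) (u' := fun t => -u' t) hab
    (fun t ht => (hu t ht).neg) (fun t ht => by simpa using h0 t ht)
  simpa using this

private lemma convex_image_of_continuousOn {s : Set ℝ} {F : ℝ → ℝ} (hs : Convex ℝ s)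
    (hF : ContinuousOn F s) : Convex ℝ (F '' s) :=
  ((hs.isPreconnected.image F hF).ordConnected).convex

private lemma master {I : Set ℝ} (hIo : IsOpen I) (hIc : Convex ℝ I)
    {F φ w H : ℝ → ℝ} (hF : ∀ x ∈ I, HasDerivAt F (φ x) x)
    (hφ : ∀ x ∈ I, HasDerivAt φ (w x) x)
    (hw0 : ∀ x ∈ I, w x ≠ 0)
    (hH : ∀ x ∈ I, H (F x) = φ x * (φ x / w x))
    {ε : ℝ} (hε : ε = 1 ∨ ε = -1)
    (hwsign : (∀ x ∈ I, 0 < ε * w x) ∨ (∀ x ∈ I, ε * w x < 0))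
    (hconv : ConvexOn ℝ I (fun x => ε * (φ x / w x)))
    (hφsign : ∀ x ∈ I, 0 < ε * φ x) :
    ConvexOn ℝ (F '' I) H := by
  have hε2 : ε * ε = 1 := by rcases hε with h | h <;> rw [h] <;> norm_num
  have hFc : ContinuousOn F I := fun x hx => (hF x hx).continuousAt.continuousWithinAt
  refine supline_convexOn (convex_image_of_continuousOn hIc hFc) ?_
  rintro _ ⟨x0, hx0, rfl⟩
  obtain ⟨m, hm⟩ := exists_subgradient hIo hconv hx0
  refine ⟨1 + ε * m, ?_⟩
  rintro _ ⟨x, hx, rfl⟩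
  set A : ℝ := φ x0 / w x0 with hA
  set D : ℝ → ℝ := fun t => ε * (φ t / w t) - (ε * A + m * (t - x0)) with hD
  have hD0 : ∀ t ∈ I, 0 ≤ D t := by
    intro t ht
    have := hm t ht
    simp only [hD]
    linarith
  have hDx0 : D x0 = 0 := by simp [hD, hA]
  have hDconv : ConvexOn ℝ I D := by
    have h1 := hconv.add (affine_convexOn hIc (-(ε * A)) (-m) x0)
    refine h1.congr fun t ht => ?_
    simp only [hD, Pi.add_apply]
    ring
  set ρ : ℝ → ℝ := fun t => φ t * (A + ε * m * (t - x0)) - (1 + ε * m) * F t with hρ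
  have hρd : ∀ t ∈ I, HasDerivAt ρ (-ε * (w t * D t)) t := by
    intro t ht
    have h1 : HasDerivAt (fun t => A + ε * m * (t - x0)) (ε * m) t := by
      simpa using (((hasDerivAt_id t).sub_const x0).const_mul (ε * m)).const_add A
    have h3 := ((hφ t ht).mul h1).sub (HasDerivAt.const_mul (1 + ε * m) (hF t ht))
    refine h3.congr_deriv (Eq.symm ?_)
    have hDt : w t * D t = ε * φ t - w t * (ε * A + m * (t - x0)) := by
      have hwt := hw0 t ht
      simp only [hD]
      field_simp
    rw [hDt]
    linear_combination (w t * A - φ t) * hε2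
  set τ : ℝ → ℝ := fun t => ρ t + (ε * D x) * φ t with hτ
  have hτd : ∀ t ∈ I, HasDerivAt τ (ε * w t * (D x - D t)) t := by
    intro t ht
    have h1 := (hρd t ht).add (HasDerivAt.const_mul (ε * D x) (hφ t ht))
    refine h1.congr_deriv (Eq.symm ?_)
    ring
  have hsub : uIcc x0 x ⊆ I := hIc.ordConnected.uIcc_subset hx0 hx
  have hDle : ∀ t ∈ uIcc x0 x, D t ≤ D x := by
    intro t ht
    have h1 : D t ≤ max (D x0) (D x) :=
      hDconv.le_on_segment hx0 hx (by rwa [segment_eq_uIcc])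
    rwa [hDx0, max_eq_right (hD0 x hx)] at h1
  set ψ : ℝ := φ x * (φ x / w x) - φ x0 * A - (1 + ε * m) * (F x - F x0) with hψdef
  have e1 : ε * φ x * D x = φ x * (φ x / w x) - φ x * A - ε * m * φ x * (x - x0) := by
    simp only [hD]
    linear_combination (φ x * (φ x / w x) - φ x * A) * hε2
  have hid1 : ψ = ε * φ x * D x + (ρ x - ρ x0) := by
    rw [hψdef]
    simp only [hρ]
    linear_combination -e1
  have hid2 : ψ = ε * φ x0 * D x + (τ x - τ x0) := by
    rw [hid1]
    simp only [hτ]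
    ring
  have hψ0 : 0 ≤ ψ := by
    rcases le_total x0 x with hle | hle
    · rw [uIcc_of_le hle] at hsub hDle
      rcases hwsign with hw | hw
      · have hτmono : τ x0 ≤ τ x :=
          le_of_hasDerivAt_nonneg hle (fun t ht => hτd t (hsub ht))
            (fun t ht => by nlinarith [hw t (hsub ht), hDle t ht])
        have h4 := hφsign x0 hx0
        have h5 := hD0 x hx
        rw [hid2]
        nlinarith
      · have hρmono : ρ x0 ≤ ρ x :=
          le_of_hasDerivAt_nonneg hle (fun t ht => hρd t (hsub ht))
            (fun t ht => by nlinarith [hw t (hsub ht), hD0 t (hsub ht)])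
        have h4 := hφsign x hx
        have h5 := hD0 x hx
        rw [hid1]
        nlinarith
    · rw [uIcc_of_ge hle] at hsub hDle
      rcases hwsign with hw | hw
      · have hρmono : ρ x0 ≤ ρ x :=
          le_of_hasDerivAt_nonpos hle (fun t ht => hρd t (hsub ht))
            (fun t ht => by nlinarith [hw t (hsub ht), hD0 t (hsub ht)])
        have h4 := hφsign x hx
        have h5 := hD0 x hx
        rw [hid1]
        nlinarith
      · have hτmono : τ x0 ≤ τ x :=
          le_of_hasDerivAt_nonpos hle (fun t ht => hτd t (hsub ht))
            (fun t ht => by nlinarith [hw t (hsub ht), hDle t ht])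
        have h4 := hφsign x0 hx0
        have h5 := hD0 x hx
        rw [hid2]
        nlinarith
  rw [hH x hx, hH x0 hx0]
  rw [hψdef, hA] at hψ0
  linarith

private lemma concave_of_neg_image {s : Set ℝ} {H : ℝ → ℝ}
    (hc : ConvexOn ℝ ((fun y : ℝ => -y) '' s) (fun y => -H (-y))) : ConcaveOn ℝ s H := by
  have hmem : ∀ z : ℝ, z ∈ (fun y : ℝ => -y) '' s ↔ -z ∈ s := by
    intro z
    constructor
    · rintro ⟨u, hu, rfl⟩; simpa using hu
    · intro hz; exact ⟨-z, hz, by simp⟩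
  constructor
  · intro a ha b hb μ ν hμ hν hμν
    have h1 := hc.1 ((hmem (-a)).2 (by simpa using ha)) ((hmem (-b)).2 (by simpa using hb)) hμ hν hμν
    rw [hmem] at h1
    have h3 : -(μ • -a + ν • -b) = μ • a + ν • b := by
      simp only [smul_eq_mul]; ring
    rwa [h3] at h1
  · intro a ha b hb μ ν hμ hν hμν
    have h2 := hc.2 ((hmem (-a)).2 (by simpa using ha)) ((hmem (-b)).2 (by simpa using hb)) hμ hν hμν
    simp only [smul_eq_mul, neg_neg] at h2 ⊢
    have h3 : -(μ * -a + ν * -b) = μ * a + ν * b := by ring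
    rw [h3] at h2
    linarith

private lemma master_concave {I : Set ℝ} (hIo : IsOpen I) (hIc : Convex ℝ I)
    {F φ w H : ℝ → ℝ} (hF : ∀ x ∈ I, HasDerivAt F (φ x) x)
    (hφ : ∀ x ∈ I, HasDerivAt φ (w x) x)
    (hw0 : ∀ x ∈ I, w x ≠ 0)
    (hH : ∀ x ∈ I, H (F x) = φ x * (φ x / w x))
    {ε : ℝ} (hε : ε = 1 ∨ ε = -1)
    (hwsign : (∀ x ∈ I, 0 < ε * w x) ∨ (∀ x ∈ I, ε * w x < 0))
    (hconv : ConvexOn ℝ I (fun x => ε * (φ x / w x)))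
    (hφsign : ∀ x ∈ I, ε * φ x < 0) :
    ConcaveOn ℝ (F '' I) H := by
  have hmain : ConvexOn ℝ ((fun t => -F t) '' I) (fun y => -H (-y)) := by
    refine master hIo hIc (F := fun t => -F t) (φ := fun t => -φ t) (w := fun t => -w t)
      (H := fun y => -H (-y))
      (fun x hx => (hF x hx).neg) (fun x hx => (hφ x hx).neg)
      (fun x hx => neg_ne_zero.2 (hw0 x hx))
      (fun x hx => by
        simp only [neg_neg]
        rw [hH x hx, neg_div_neg_eq]
        ring)
      hε ?_ ?_ ?_
    · rcases hwsign with hw | hw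
      · right; intro x hx; have := hw x hx; show ε * -w x < 0; linarith
      · left; intro x hx; have := hw x hx; show 0 < ε * -w x; linarith
    · exact hconv.congr fun x hx => by rw [neg_div_neg_eq]
    · intro x hx; have := hφsign x hx; show 0 < ε * -φ x; linarith
  have himg : (fun t => -F t) '' I = (fun y : ℝ => -y) '' (F '' I) := by
    ext z
    simp only [Set.mem_image]
    constructor
    · rintro ⟨x, hx, rfl⟩; exact ⟨F x, ⟨x, hx, rfl⟩, rfl⟩
    · rintro ⟨y, ⟨x, hx, rfl⟩, rfl⟩; exact ⟨x, hx, rfl⟩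
  rw [himg] at hmain
  exact concave_of_neg_image hmain

private lemma deriv_pos_of_strictMonoOn {I : Set ℝ} (hIo : IsOpen I) {f φ w : ℝ → ℝ}
    (hmono : StrictMonoOn f I) (hd : ∀ x ∈ I, HasDerivAt f (φ x) x)
    (hφd : ∀ x ∈ I, HasDerivAt φ (w x) x) (hw0 : ∀ x ∈ I, w x ≠ 0) :
    ∀ x ∈ I, 0 < φ x := by
  have hnn : ∀ x ∈ I, 0 ≤ φ x := by
    intro x hx
    have ht : Tendsto (slope f x) (𝓝[>] x) (𝓝 (φ x)) :=
      (hasDerivAt_iff_tendsto_slope.1 (hd x hx)).mono_left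
        (nhdsWithin_mono x fun y hy => ne_of_gt hy)
    refine ge_of_tendsto ht ?_
    filter_upwards [(hIo.eventually_mem hx).filter_mono nhdsWithin_le_nhds,
      self_mem_nhdsWithin] with y hyI hyx
    rw [slope_def_field]
    have h1 : f x < f y := hmono hx hyI hyx
    have h2 : (0:ℝ) < y - x := sub_pos.2 hyx
    exact le_of_lt (div_pos (sub_pos.2 h1) h2)
  intro x hx
  rcases (hnn x hx).lt_or_eq with hlt | heq
  · exact hlt
  · exfalso
    have hmin : IsLocalMin φ x := by
      filter_upwards [hIo.eventually_mem hx] with y hy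
      rw [← heq]
      exact hnn y hy
    exact hw0 x hx (hmin.hasDerivAt_eq_zero (hφd x hx))

private lemma deriv_neg_of_strictAntiOn {I : Set ℝ} (hIo : IsOpen I) {f φ w : ℝ → ℝ}
    (hanti : StrictAntiOn f I) (hd : ∀ x ∈ I, HasDerivAt f (φ x) x)
    (hφd : ∀ x ∈ I, HasDerivAt φ (w x) x) (hw0 : ∀ x ∈ I, w x ≠ 0) :
    ∀ x ∈ I, φ x < 0 := by
  have hmono : StrictMonoOn (fun t => -f t) I := fun a ha b hb hab => neg_lt_neg (hanti ha hb hab)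
  have := deriv_pos_of_strictMonoOn hIo hmono (fun x hx => (hd x hx).neg)
    (fun x hx => (hφd x hx).neg) (fun x hx => neg_ne_zero.2 (hw0 x hx))
  intro x hx
  have h2 : 0 < -φ x := this x hx
  linarith

private lemma isOpen_of_neg_image {s : Set ℝ} (h : IsOpen ((fun y : ℝ => -y) '' s)) :
    IsOpen s := by
  have h2 : s = (fun y : ℝ => -y) ⁻¹' ((fun y : ℝ => -y) '' s) := by
    ext z
    simp only [Set.mem_preimage, Set.mem_image]
    constructor
    · intro hz; exact ⟨z, hz, rfl⟩
    · rintro ⟨u, hu, huz⟩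
      have : u = z := by linarith [neg_inj.1 huz]
      rwa [← this]
  rw [h2]
  exact h.preimage continuous_neg

private lemma inv_open_and_cont {I : Set ℝ} (hIo : IsOpen I) {f g : ℝ → ℝ}
    (hmono : StrictMonoOn f I) (hcont : ContinuousOn f I)
    (hgI : ∀ y ∈ f '' I, g y ∈ I) (hfg : ∀ y ∈ f '' I, f (g y) = y) :
    IsOpen (f '' I) ∧ ∀ y ∈ f '' I, ContinuousAt g y := by
  have key : ∀ x0 ∈ I, ∀ ε > (0:ℝ), Icc (x0 - ε) (x0 + ε) ⊆ I →
      f x0 ∈ Ioo (f (x0 - ε)) (f (x0 + ε)) ∧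
      Ioo (f (x0 - ε)) (f (x0 + ε)) ⊆ f '' I ∧
      ∀ y ∈ Ioo (f (x0 - ε)) (f (x0 + ε)), g y ∈ Ioo (x0 - ε) (x0 + ε) := by
    intro x0 hx0 ε hε hsub
    have ha : x0 - ε ∈ I := hsub ⟨le_refl _, by linarith⟩
    have hb : x0 + ε ∈ I := hsub ⟨by linarith, le_refl _⟩
    have hmem : f x0 ∈ Ioo (f (x0 - ε)) (f (x0 + ε)) :=
      ⟨hmono ha hx0 (by linarith), hmono hx0 hb (by linarith)⟩
    have hIVT : Ioo (f (x0 - ε)) (f (x0 + ε)) ⊆ f '' Ioo (x0 - ε) (x0 + ε) :=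
      intermediate_value_Ioo (by linarith) (hcont.mono hsub)
    have hsub2 : Ioo (f (x0 - ε)) (f (x0 + ε)) ⊆ f '' I :=
      hIVT.trans (Set.image_mono (Set.Ioo_subset_Icc_self.trans hsub))
    refine ⟨hmem, hsub2, fun y hy => ?_⟩
    have hyJ : y ∈ f '' I := hsub2 hy
    have hgy : g y ∈ I := hgI y hyJ
    constructor
    · by_contra hcon
      push_neg at hcon
      have h1 : f (g y) ≤ f (x0 - ε) := hmono.monotoneOn hgy ha hcon
      rw [hfg y hyJ] at h1
      exact absurd h1 (not_le.2 hy.1)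
    · by_contra hcon
      push_neg at hcon
      have h1 : f (x0 + ε) ≤ f (g y) := hmono.monotoneOn hb hgy hcon
      rw [hfg y hyJ] at h1
      exact absurd h1 (not_le.2 hy.2)
  constructor
  · rw [isOpen_iff_mem_nhds]
    rintro _ ⟨x0, hx0, rfl⟩
    obtain ⟨δ, hδ, hball⟩ := Metric.isOpen_iff.1 hIo x0 hx0
    have hsub : Icc (x0 - δ / 2) (x0 + δ / 2) ⊆ I := fun t ht => hball (by
      rw [Metric.mem_ball, Real.dist_eq]
      exact abs_lt.2 ⟨by linarith [ht.1], by linarith [ht.2]⟩)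
    obtain ⟨hmem, hsub2, _⟩ := key x0 hx0 (δ / 2) (by linarith) hsub
    exact Filter.mem_of_superset (Ioo_mem_nhds hmem.1 hmem.2) hsub2
  · intro y0 hy0
    have hx0 : g y0 ∈ I := hgI y0 hy0
    have : Tendsto g (𝓝 y0) (𝓝 (g y0)) := by
      rw [(nhds_basis_Ioo_pos (g y0)).tendsto_right_iff]
      intro ε' hε'
      obtain ⟨δ, hδ, hball⟩ := Metric.isOpen_iff.1 hIo (g y0) hx0
      set ε := min ε' (δ / 2) with hεdef
      have hεpos : 0 < ε := lt_min hε' (by linarith)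
      have hεδ : ε ≤ δ / 2 := min_le_right _ _
      have hεε' : ε ≤ ε' := min_le_left _ _
      have hsub : Icc (g y0 - ε) (g y0 + ε) ⊆ I := fun t ht => hball (by
        rw [Metric.mem_ball, Real.dist_eq]
        exact abs_lt.2 ⟨by linarith [ht.1], by linarith [ht.2]⟩)
      obtain ⟨hmem, hsub2, hgmem2⟩ := key (g y0) hx0 ε hεpos hsub
      rw [hfg y0 hy0] at hmem
      filter_upwards [Ioo_mem_nhds hmem.1 hmem.2] with y hy
      have h3 := hgmem2 y hy
      exact ⟨by linarith [h3.1], by linarith [h3.2]⟩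
    exact this

private lemma inv_open_and_cont_anti {I : Set ℝ} (hIo : IsOpen I) {f g : ℝ → ℝ}
    (hanti : StrictAntiOn f I) (hcont : ContinuousOn f I)
    (hgI : ∀ y ∈ f '' I, g y ∈ I) (hfg : ∀ y ∈ f '' I, f (g y) = y) :
    IsOpen (f '' I) ∧ ∀ y ∈ f '' I, ContinuousAt g y := by
  have hmono : StrictMonoOn (fun x => -f x) I := fun a ha b hb hab => neg_lt_neg (hanti ha hb hab)
  have hcont2 : ContinuousOn (fun x => -f x) I := hcont.neg
  have himg : (fun x => -f x) '' I = (fun y : ℝ => -y) '' (f '' I) := by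
    ext z
    simp only [Set.mem_image]
    constructor
    · rintro ⟨x, hx, rfl⟩; exact ⟨f x, ⟨x, hx, rfl⟩, rfl⟩
    · rintro ⟨y, ⟨x, hx, rfl⟩, rfl⟩; exact ⟨x, hx, rfl⟩
  have hgI2 : ∀ z ∈ (fun x => -f x) '' I, g (-z) ∈ I := by
    rintro z ⟨x, hx, rfl⟩
    rw [neg_neg]
    exact hgI (f x) ⟨x, hx, rfl⟩
  have hfg2 : ∀ z ∈ (fun x => -f x) '' I, -f (g (-z)) = z := by
    rintro z ⟨x, hx, rfl⟩
    rw [neg_neg, hfg (f x) ⟨x, hx, rfl⟩]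
  obtain ⟨hopen, hcontg⟩ := inv_open_and_cont hIo (g := fun z => g (-z)) hmono hcont2 hgI2 hfg2
  constructor
  · rw [himg] at hopen
    exact isOpen_of_neg_image hopen
  · intro y hy
    have hy2 : -y ∈ (fun x => -f x) '' I := by
      rw [himg]; exact ⟨y, hy, rfl⟩
    have h1 : ContinuousAt (fun z => g (-z)) (-y) := hcontg (-y) hy2
    have h3 := h1.comp (continuous_neg.continuousAt (x := y))
    have h4 : ((fun z => g (-z)) ∘ Neg.neg) = g := by
      ext u; simp
    rwa [h4] at h3

private lemma quad {I : Set ℝ} (hIopen : IsOpen I) (hIconv : Convex ℝ I)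
    {f φ w g h H : ℝ → ℝ}
    (hfd : ∀ x ∈ I, HasDerivAt f (φ x) x)
    (hφd : ∀ x ∈ I, HasDerivAt φ (w x) x)
    (hw0 : ∀ x ∈ I, w x ≠ 0)
    (hwsign : (∀ x ∈ I, 0 < w x) ∨ (∀ x ∈ I, w x < 0))
    (hφ0 : ∀ x ∈ I, φ x ≠ 0)
    (hh : ∀ x ∈ I, h x = φ x / w x)
    (hHf : ∀ x ∈ I, H (f x) = φ x * (φ x / w x))
    (hJopen : IsOpen (f '' I))
    (hgmem : ∀ y ∈ f '' I, g y ∈ I)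
    (hfg : ∀ y ∈ f '' I, f (g y) = y)
    (hgf : ∀ x ∈ I, g (f x) = x)
    (hgcont : ∀ y ∈ f '' I, ContinuousAt g y)
    (hHg : ∀ y ∈ f '' I, H y = (φ (g y)) ^ 2 / w (g y)) :
    ((∀ x ∈ I, 0 < φ x) →
      (ConvexOn ℝ I h ↔ ConvexOn ℝ (f '' I) H) ∧
      (ConcaveOn ℝ I h ↔ ConcaveOn ℝ (f '' I) H)) ∧
    ((∀ x ∈ I, φ x < 0) →
      (ConvexOn ℝ I h ↔ ConcaveOn ℝ (f '' I) H) ∧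
      (ConcaveOn ℝ I h ↔ ConvexOn ℝ (f '' I) H)) := by
  have hJconv : Convex ℝ (f '' I) :=
    convex_image_of_continuousOn hIconv fun x hx => (hfd x hx).continuousAt.continuousWithinAt
  have hgd : ∀ y ∈ f '' I, HasDerivAt g ((fun z => (φ (g z))⁻¹) y) y := by
    intro y hy
    refine HasDerivAt.of_local_left_inverse (hgcont y hy) (hfd (g y) (hgmem y hy))
      (hφ0 _ (hgmem y hy)) ?_
    filter_upwards [hJopen.eventually_mem hy] with z hz
    exact hfg z hz
  have hφgd : ∀ y ∈ f '' I,
      HasDerivAt (fun z => (φ (g z))⁻¹) ((fun z => -w (g z) / φ (g z) ^ 3) y) y := by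
    intro y hy
    have hne1 : φ (g y) ≠ 0 := hφ0 _ (hgmem y hy)
    have h1 : HasDerivAt (φ ∘ g) (w (g y) * (φ (g y))⁻¹) y :=
      (hφd (g y) (hgmem y hy)).comp y (hgd y hy)
    have h2 := h1.inv hne1
    refine h2.congr_deriv (Eq.symm ?_)
    show -w (g y) / φ (g y) ^ 3 = -(w (g y) * (φ (g y))⁻¹) / φ (g y) ^ 2
    rw [div_eq_div_iff (pow_ne_zero 3 hne1) (pow_ne_zero 2 hne1)]
    linear_combination (w (g y) * φ (g y) ^ 2) * (mul_inv_cancel₀ hne1)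
  have hwg0 : ∀ y ∈ f '' I, (fun z => -w (g z) / φ (g z) ^ 3) y ≠ 0 := by
    intro y hy
    show -w (g y) / φ (g y) ^ 3 ≠ 0
    exact div_ne_zero (neg_ne_zero.2 (hw0 _ (hgmem y hy))) (pow_ne_zero _ (hφ0 _ (hgmem y hy)))
  have hgJ : g '' (f '' I) = I := by
    ext x
    constructor
    · rintro ⟨y, hy, rfl⟩; exact hgmem y hy
    · intro hx; exact ⟨f x, ⟨x, hx, rfl⟩, hgf x hx⟩
  have hHgval : ∀ y ∈ f '' I,
      -h (g y) = (φ (g y))⁻¹ * ((φ (g y))⁻¹ / (-w (g y) / φ (g y) ^ 3)) := by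
    intro y hy
    have hgyI := hgmem y hy
    have hne1 := hφ0 _ hgyI
    have hne2 := hw0 _ hgyI
    rw [hh _ hgyI]
    field_simp
  have hwsign1 : (∀ x ∈ I, 0 < (1:ℝ) * w x) ∨ (∀ x ∈ I, (1:ℝ) * w x < 0) := by
    rcases hwsign with hw | hw
    · left; intro x hx; have := hw x hx; linarith
    · right; intro x hx; have := hw x hx; linarith
  have hwsign2 : (∀ x ∈ I, 0 < (-1:ℝ) * w x) ∨ (∀ x ∈ I, (-1:ℝ) * w x < 0) := by
    rcases hwsign with hw | hw
    · right; intro x hx; have := hw x hx; linarith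
    · left; intro x hx; have := hw x hx; linarith
  constructor
  · -- φ > 0 on I
    intro hφpos
    have hφgpos : ∀ y ∈ f '' I, 0 < (φ (g y))⁻¹ :=
      fun y hy => inv_pos.2 (hφpos _ (hgmem y hy))
    have hwgsign : (∀ y ∈ f '' I, 0 < -w (g y) / φ (g y) ^ 3) ∨
        (∀ y ∈ f '' I, -w (g y) / φ (g y) ^ 3 < 0) := by
      rcases hwsign with hw | hw
      · right; intro y hy
        exact div_neg_of_neg_of_pos (by linarith [hw _ (hgmem y hy)])
          (pow_pos (hφpos _ (hgmem y hy)) 3)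
      · left; intro y hy
        exact div_pos (by linarith [hw _ (hgmem y hy)]) (pow_pos (hφpos _ (hgmem y hy)) 3)
    have hwgsign1 : (∀ y ∈ f '' I, 0 < (1:ℝ) * ((fun z => -w (g z) / φ (g z) ^ 3) y)) ∨
        (∀ y ∈ f '' I, (1:ℝ) * ((fun z => -w (g z) / φ (g z) ^ 3) y) < 0) := by
      rcases hwgsign with hw | hw
      · left; intro y hy; have := hw y hy; show 0 < 1 * (-w (g y) / φ (g y) ^ 3); linarith
      · right; intro y hy; have := hw y hy; show 1 * (-w (g y) / φ (g y) ^ 3) < 0; linarith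
    have hwgsign2 : (∀ y ∈ f '' I, 0 < (-1:ℝ) * ((fun z => -w (g z) / φ (g z) ^ 3) y)) ∨
        (∀ y ∈ f '' I, (-1:ℝ) * ((fun z => -w (g z) / φ (g z) ^ 3) y) < 0) := by
      rcases hwgsign with hw | hw
      · right; intro y hy; have := hw y hy; show -1 * (-w (g y) / φ (g y) ^ 3) < 0; linarith
      · left; intro y hy; have := hw y hy; show 0 < -1 * (-w (g y) / φ (g y) ^ 3); linarith
    constructor
    · constructor
      · intro hcv
        refine master hIopen hIconv hfd hφd hw0 hHf (Or.inl rfl) hwsign1 ?_ ?_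
        · exact hcv.congr fun x hx => by
            show h x = 1 * (φ x / w x); rw [one_mul]; exact hh x hx
        · intro x hx; show 0 < 1 * φ x; have := hφpos x hx; linarith
      · intro hHcv
        have hres := master_concave (H := fun x => -h x) hJopen hJconv hgd hφgd hwg0 hHgval (Or.inr rfl) hwgsign2
          (hHcv.congr fun y hy => by
            show H y = -1 * ((φ (g y))⁻¹ / (-w (g y) / φ (g y) ^ 3))
            rw [hHg y hy]
            have hne1 := hφ0 _ (hgmem y hy)
            have hne2 := hw0 _ (hgmem y hy)
            field_simp)
          (fun y hy => by
            show -1 * (φ (g y))⁻¹ < 0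
            have := hφgpos y hy; linarith)
        rw [hgJ] at hres
        have h2 := hres.neg
        exact h2.congr fun x hx => by show -(fun x => -h x) x = h x; simp
    · constructor
      · intro hcc
        refine master_concave hIopen hIconv hfd hφd hw0 hHf (Or.inr rfl) hwsign2 ?_ ?_
        · exact hcc.neg.congr fun x hx => by
            show (-h) x = -1 * (φ x / w x)
            simp only [Pi.neg_apply]
            rw [hh x hx]; ring
        · intro x hx; show -1 * φ x < 0; have := hφpos x hx; linarith
      · intro hHcc
        have hres := master (H := fun x => -h x) hJopen hJconv hgd hφgd hwg0 hHgval (Or.inl rfl) hwgsign1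
          (hHcc.neg.congr fun y hy => by
            show (-H) y = 1 * ((φ (g y))⁻¹ / (-w (g y) / φ (g y) ^ 3))
            simp only [Pi.neg_apply]
            rw [hHg y hy]
            have hne1 := hφ0 _ (hgmem y hy)
            have hne2 := hw0 _ (hgmem y hy)
            field_simp)
          (fun y hy => by
            show 0 < 1 * (φ (g y))⁻¹
            have := hφgpos y hy; linarith)
        rw [hgJ] at hres
        have h2 := hres.neg
        exact h2.congr fun x hx => by show -(fun x => -h x) x = h x; simp
  · -- φ < 0 on I
    intro hφneg
    have hφgneg : ∀ y ∈ f '' I, (φ (g y))⁻¹ < 0 :=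
      fun y hy => inv_neg''.2 (hφneg _ (hgmem y hy))
    have hcube : ∀ y ∈ f '' I, φ (g y) ^ 3 < 0 := fun y hy =>
      Odd.pow_neg (by decide) (hφneg _ (hgmem y hy))
    have hwgsign : (∀ y ∈ f '' I, 0 < -w (g y) / φ (g y) ^ 3) ∨
        (∀ y ∈ f '' I, -w (g y) / φ (g y) ^ 3 < 0) := by
      rcases hwsign with hw | hw
      · left; intro y hy
        exact div_pos_of_neg_of_neg (by linarith [hw _ (hgmem y hy)]) (hcube y hy)
      · right; intro y hy
        exact div_neg_of_pos_of_neg (by linarith [hw _ (hgmem y hy)]) (hcube y hy)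
    have hwgsign1 : (∀ y ∈ f '' I, 0 < (1:ℝ) * ((fun z => -w (g z) / φ (g z) ^ 3) y)) ∨
        (∀ y ∈ f '' I, (1:ℝ) * ((fun z => -w (g z) / φ (g z) ^ 3) y) < 0) := by
      rcases hwgsign with hw | hw
      · left; intro y hy; have := hw y hy; show 0 < 1 * (-w (g y) / φ (g y) ^ 3); linarith
      · right; intro y hy; have := hw y hy; show 1 * (-w (g y) / φ (g y) ^ 3) < 0; linarith
    have hwgsign2 : (∀ y ∈ f '' I, 0 < (-1:ℝ) * ((fun z => -w (g z) / φ (g z) ^ 3) y)) ∨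
        (∀ y ∈ f '' I, (-1:ℝ) * ((fun z => -w (g z) / φ (g z) ^ 3) y) < 0) := by
      rcases hwgsign with hw | hw
      · right; intro y hy; have := hw y hy; show -1 * (-w (g y) / φ (g y) ^ 3) < 0; linarith
      · left; intro y hy; have := hw y hy; show 0 < -1 * (-w (g y) / φ (g y) ^ 3); linarith
    constructor
    · constructor
      · intro hcv
        refine master_concave hIopen hIconv hfd hφd hw0 hHf (Or.inl rfl) hwsign1 ?_ ?_
        · exact hcv.congr fun x hx => by
            show h x = 1 * (φ x / w x); rw [one_mul]; exact hh x hx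
        · intro x hx; show 1 * φ x < 0; have := hφneg x hx; linarith
      · intro hHcc
        have hres := master_concave (H := fun x => -h x) hJopen hJconv hgd hφgd hwg0 hHgval
          (Or.inl rfl) hwgsign1
          (hHcc.neg.congr fun y hy => by
            show (-H) y = 1 * ((φ (g y))⁻¹ / (-w (g y) / φ (g y) ^ 3))
            simp only [Pi.neg_apply]
            rw [hHg y hy]
            have hne1 := hφ0 _ (hgmem y hy)
            have hne2 := hw0 _ (hgmem y hy)
            field_simp)
          (fun y hy => by
            show 1 * (φ (g y))⁻¹ < 0
            have := hφgneg y hy; linarith)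
        rw [hgJ] at hres
        have h2 := hres.neg
        exact h2.congr fun x hx => by show -(fun x => -h x) x = h x; simp
    · constructor
      · intro hcc
        refine master hIopen hIconv hfd hφd hw0 hHf (Or.inr rfl) hwsign2 ?_ ?_
        · exact hcc.neg.congr fun x hx => by
            show (-h) x = -1 * (φ x / w x)
            simp only [Pi.neg_apply]
            rw [hh x hx]; ring
        · intro x hx; show 0 < -1 * φ x; have := hφneg x hx; linarith
      · intro hHcv
        have hres := master (H := fun x => -h x) hJopen hJconv hgd hφgd hwg0 hHgval
          (Or.inr rfl) hwgsign2
          (hHcv.congr fun y hy => by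
            show H y = -1 * ((φ (g y))⁻¹ / (-w (g y) / φ (g y) ^ 3))
            rw [hHg y hy]
            have hne1 := hφ0 _ (hgmem y hy)
            have hne2 := hw0 _ (hgmem y hy)
            field_simp)
          (fun y hy => by
            show 0 < -1 * (φ (g y))⁻¹
            have := hφgneg y hy; linarith)
        rw [hgJ] at hres
        have h2 := hres.neg
        exact h2.congr fun x hx => by show -(fun x => -h x) x = h x; simp

theorem h_H_convexity_correspondence
    (I : Set ℝ) (hIopen : IsOpen I) (hIconv : Convex ℝ I)
    (f : ℝ → ℝ) (hf : ContDiffOn ℝ 2 f I)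
    (hmono : StrictMonoOn f I ∨ StrictAntiOn f I)
    (hne : ∀ x ∈ I, deriv (deriv f) x ≠ 0)
    (g : ℝ → ℝ) (hg : g = Function.invFunOn f I)
    (h : ℝ → ℝ) (hh : ∀ x ∈ I, h x = deriv f x / deriv (deriv f) x)
    (H : ℝ → ℝ) (hH : ∀ y ∈ f '' I, H y = (deriv f (g y)) ^ 2 / deriv (deriv f) (g y)) :
    (StrictMonoOn f I →
      ((ConvexOn ℝ I h ↔ ConvexOn ℝ (f '' I) H) ∧
        (ConcaveOn ℝ I h ↔ ConcaveOn ℝ (f '' I) H))) ∧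
    (StrictAntiOn f I →
      ((ConvexOn ℝ I h ↔ ConcaveOn ℝ (f '' I) H) ∧
        (ConcaveOn ℝ I h ↔ ConvexOn ℝ (f '' I) H))) := by
  have hfd : ∀ x ∈ I, HasDerivAt f (deriv f x) x := by
    intro x hx
    have h1 : DifferentiableOn ℝ f I := hf.differentiableOn (by norm_num)
    exact ((h1 x hx).differentiableAt (hIopen.mem_nhds hx)).hasDerivAt
  have hφC1 : ContDiffOn ℝ 1 (deriv f) I := by
    have h1 := hf.derivWithin (m := 1) hIopen.uniqueDiffOn (by norm_num)
    exact h1.congr fun x hx => (derivWithin_of_isOpen hIopen hx).symm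
  have hφd : ∀ x ∈ I, HasDerivAt (deriv f) (deriv (deriv f) x) x := by
    intro x hx
    exact (((hφC1.differentiableOn one_ne_zero) x hx).differentiableAt (hIopen.mem_nhds hx)).hasDerivAt
  have hwC : ContinuousOn (deriv (deriv f)) I := by
    have h1 := hφC1.continuousOn_derivWithin hIopen.uniqueDiffOn le_rfl
    exact h1.congr fun x hx => (derivWithin_of_isOpen hIopen hx).symm
  have hwsign := sign_dichotomy hIconv hwC hne
  have hfcont : ContinuousOn f I := fun x hx => (hfd x hx).continuousAt.continuousWithinAt
  constructor
  · intro hm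
    have hinj : Set.InjOn f I := hm.injOn
    have hgmem : ∀ y ∈ f '' I, g y ∈ I := by
      rintro y ⟨x, hx, rfl⟩
      rw [hg]
      exact Function.invFunOn_mem ⟨x, hx, rfl⟩
    have hfg : ∀ y ∈ f '' I, f (g y) = y := by
      rintro y ⟨x, hx, rfl⟩
      rw [hg]
      exact Function.invFunOn_eq ⟨x, hx, rfl⟩
    have hgf : ∀ x ∈ I, g (f x) = x := by
      intro x hx
      rw [hg]
      exact hinj.leftInvOn_invFunOn hx
    have hHf : ∀ x ∈ I, H (f x) = deriv f x * (deriv f x / deriv (deriv f) x) := by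
      intro x hx
      rw [hH (f x) ⟨x, hx, rfl⟩, hgf x hx, pow_two, mul_div_assoc]
    have hφpos := deriv_pos_of_strictMonoOn hIopen hm hfd hφd hne
    obtain ⟨hJopen, hgcont⟩ := inv_open_and_cont hIopen hm hfcont hgmem hfg
    have hq := quad hIopen hIconv hfd hφd hne hwsign (fun x hx => ne_of_gt (hφpos x hx))
      hh hHf hJopen hgmem hfg hgf hgcont hH
    exact hq.1 hφpos
  · intro ha
    have hinj : Set.InjOn f I := ha.injOn
    have hgmem : ∀ y ∈ f '' I, g y ∈ I := by
      rintro y ⟨x, hx, rfl⟩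
      rw [hg]
      exact Function.invFunOn_mem ⟨x, hx, rfl⟩
    have hfg : ∀ y ∈ f '' I, f (g y) = y := by
      rintro y ⟨x, hx, rfl⟩
      rw [hg]
      exact Function.invFunOn_eq ⟨x, hx, rfl⟩
    have hgf : ∀ x ∈ I, g (f x) = x := by
      intro x hx
      rw [hg]
      exact hinj.leftInvOn_invFunOn hx
    have hHf : ∀ x ∈ I, H (f x) = deriv f x * (deriv f x / deriv (deriv f) x) := by
      intro x hx
      rw [hH (f x) ⟨x, hx, rfl⟩, hgf x hx, pow_two, mul_div_assoc]
    have hφneg := deriv_neg_of_strictAntiOn hIopen ha hfd hφd hne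
    obtain ⟨hJopen, hgcont⟩ := inv_open_and_cont_anti hIopen ha hfcont hgmem hfg
    have hq := quad hIopen hIconv hfd hφd hne hwsign (fun x hx => ne_of_lt (hφneg x hx))
      hh hHf hJopen hgmem hfg hgf hgcont hH
    exact hq.2 hφneg
end

section
/- Let I ⊆ ℝ be an interval and let f : ℝ → ℝ be continuous and strictly increasing on I. If the f-potential λ_f is convex on L^c(Ω,I), then f is convex on I. -/
open MeasureTheory

/-- A continuous midpoint-convex function on a convex set of reals is convex. -/
theorem convexOn_of_midpoint_aux {I : Set ℝ} (hI : Convex ℝ I) {f : ℝ → ℝ}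
    (hc : ContinuousOn f I)
    (hmid : ∀ x ∈ I, ∀ y ∈ I, f ((x + y) / 2) ≤ (f x + f y) / 2) :
    ConvexOn ℝ I f := by
  classical
  refine ⟨hI, ?_⟩
  intro x hx y hy a b ha hb hab
  set S : Set ℝ := {t | t ∈ Set.Icc (0:ℝ) 1 ∧
      f ((1 - t) * x + t * y) ≤ (1 - t) * f x + t * f y} with hS
  have hmemI : ∀ t ∈ Set.Icc (0:ℝ) 1, (1 - t) * x + t * y ∈ I := by
    intro t ht
    have := hI hx hy (by linarith [ht.2] : (0:ℝ) ≤ 1 - t) ht.1 (by ring)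
    simpa [smul_eq_mul] using this
  have hSclosed : IsClosed S := by
    have h1 : ContinuousOn (fun t : ℝ => f ((1 - t) * x + t * y)) (Set.Icc 0 1) := by
      apply hc.comp (Continuous.continuousOn (by continuity)) hmemI
    have h2 : ContinuousOn (fun t : ℝ => (1 - t) * f x + t * f y) (Set.Icc 0 1) :=
      Continuous.continuousOn (by continuity)
    exact isClosed_Icc.isClosed_le h1 h2
  have h0S : (0:ℝ) ∈ S := ⟨⟨le_refl _, zero_le_one⟩, by norm_num⟩
  have h1S : (1:ℝ) ∈ S := ⟨⟨zero_le_one, le_refl _⟩, by norm_num⟩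
  have hmidS : ∀ s ∈ S, ∀ t ∈ S, (s + t) / 2 ∈ S := by
    rintro s ⟨hs01, hs⟩ t ⟨ht01, ht⟩
    refine ⟨⟨by linarith [hs01.1, ht01.1], by linarith [hs01.2, ht01.2]⟩, ?_⟩
    have h := hmid _ (hmemI s hs01) _ (hmemI t ht01)
    have e : (1 - (s + t) / 2) * x + (s + t) / 2 * y
        = (((1 - s) * x + s * y) + ((1 - t) * x + t * y)) / 2 := by ring
    rw [e]
    calc f ((((1 - s) * x + s * y) + ((1 - t) * x + t * y)) / 2)
        ≤ (f ((1 - s) * x + s * y) + f ((1 - t) * x + t * y)) / 2 := h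
      _ ≤ ((1 - s) * f x + s * f y + ((1 - t) * f x + t * f y)) / 2 := by linarith
      _ = (1 - (s + t) / 2) * f x + (s + t) / 2 * f y := by ring
  have hSfull : Set.Icc (0:ℝ) 1 ⊆ S := by
    intro t ht
    by_contra htS
    have hS1c : IsClosed (S ∩ Set.Icc 0 t) := hSclosed.inter isClosed_Icc
    have hS1ne : (S ∩ Set.Icc 0 t).Nonempty := ⟨0, h0S, le_refl _, ht.1⟩
    have hS1bdd : BddAbove (S ∩ Set.Icc 0 t) := ⟨t, fun z hz => hz.2.2⟩
    have hα : sSup (S ∩ Set.Icc 0 t) ∈ S ∩ Set.Icc 0 t := hS1c.csSup_mem hS1ne hS1bdd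
    set α := sSup (S ∩ Set.Icc 0 t) with hαdef
    have hS2c : IsClosed (S ∩ Set.Icc t 1) := hSclosed.inter isClosed_Icc
    have hS2ne : (S ∩ Set.Icc t 1).Nonempty := ⟨1, h1S, ht.2, le_refl _⟩
    have hS2bdd : BddBelow (S ∩ Set.Icc t 1) := ⟨t, fun z hz => hz.2.1⟩
    have hβ : sInf (S ∩ Set.Icc t 1) ∈ S ∩ Set.Icc t 1 := hS2c.csInf_mem hS2ne hS2bdd
    set β := sInf (S ∩ Set.Icc t 1) with hβdef
    have hαt : α < t := lt_of_le_of_ne hα.2.2 (fun h => htS (h ▸ hα.1))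
    have htβ : t < β := lt_of_le_of_ne hβ.2.1 (fun h => htS (h ▸ hβ.1))
    have hmS : (α + β) / 2 ∈ S := hmidS α hα.1 β hβ.1
    rcases le_total ((α + β) / 2) t with h | h
    · have : (α + β) / 2 ≤ α := le_csSup hS1bdd ⟨hmS, hα.2.1.trans (by linarith), h⟩
      linarith
    · have : β ≤ (α + β) / 2 := csInf_le hS2bdd ⟨hmS, h, le_trans (by linarith) hβ.2.2⟩
      linarith
  have hbmem : b ∈ Set.Icc (0:ℝ) 1 := ⟨hb, by linarith⟩
  have hfin := (hSfull hbmem).2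
  have ha' : a = 1 - b := by linarith
  simp only [smul_eq_mul]
  rw [ha']
  exact hfin

open scoped Classical in
lemma integral_ite_const {Ω : Type*} [MeasurableSpace Ω] (P : Measure Ω) [IsProbabilityMeasure P]
    {A : Set Ω} (hA : MeasurableSet A) (c d : ℝ) :
    ∫ ω, (if ω ∈ A then c else d) ∂P = (P A).toReal * c + (1 - (P A).toReal) * d := by
  classical
  have heq : (fun ω => if ω ∈ A then c else d)
      = fun ω => A.indicator (fun _ => c - d) ω + d := by
    funext ω; by_cases h : ω ∈ A <;> simp [h]
  rw [heq, integral_add ((integrable_const (c - d)).indicator hA) (integrable_const d),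
    integral_indicator_const _ hA, integral_const]
  simp only [Measure.real, measure_univ, ENNReal.toReal_one, smul_eq_mul, one_smul]
  ring

theorem potential_convex_implies_f_convex
    {Ω : Type*} [MeasurableSpace Ω] (P : Measure Ω) [IsProbabilityMeasure P]
    (hP : ∃ A : Set Ω, MeasurableSet A ∧ 0 < P A ∧ P A < 1)
    (I : Set ℝ) (hIconv : Convex ℝ I)
    (f : ℝ → ℝ) (hfc : ContinuousOn f I) (hfm : StrictMonoOn f I)
    (hpot : ConvexOn ℝ {φ : Ω → ℝ | MemLc I φ} (fPotential P f I)) :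
    ConvexOn ℝ I f := by
  classical
  obtain ⟨A, hA, hA0, hA1⟩ := hP
  set p := (P A).toReal with hpdef
  have hApt : P A ≠ ⊤ := measure_ne_top P A
  have hp0 : 0 < p := ENNReal.toReal_pos hA0.ne' hApt
  have hp1 : p < 1 := by
    have := (ENNReal.toReal_lt_toReal hApt ENNReal.one_ne_top).2 hA1
    simpa using this
  have hinj : Set.InjOn f I := hfm.injOn
  set g := Function.invFunOn f I with hgdef
  -- key inequality
  have key : ∀ x ∈ I, ∀ y ∈ I,
      x + y ≤ g (p * f x + (1 - p) * f y) + g (p * f y + (1 - p) * f x) := by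
    intro x hx y hy
    set φ : Ω → ℝ := fun ω => if ω ∈ A then x else y with hφdef
    set ψ : Ω → ℝ := fun ω => if ω ∈ A then y else x with hψdef
    have hKsub : ({x, y} : Set ℝ) ⊆ I := by
      intro z hz; rcases hz with rfl | rfl
      · exact hx
      · exact hy
    have hKcpt : IsCompact ({x, y} : Set ℝ) := (Set.finite_singleton y).insert x |>.isCompact
    have hφmem : φ ∈ {φ : Ω → ℝ | MemLc I φ} := by
      refine ⟨Measurable.ite hA measurable_const measurable_const, {x, y}, hKsub, hKcpt, ?_⟩
      intro ω; by_cases h : ω ∈ A <;> simp [hφdef, h]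
    have hψmem : ψ ∈ {φ : Ω → ℝ | MemLc I φ} := by
      refine ⟨Measurable.ite hA measurable_const measurable_const, {x, y}, hKsub, hKcpt, ?_⟩
      intro ω; by_cases h : ω ∈ A <;> simp [hψdef, h]
    have hcomb := hpot.2 hφmem hψmem (by norm_num : (0:ℝ) ≤ 1/2) (by norm_num : (0:ℝ) ≤ 1/2)
      (by norm_num : (1:ℝ)/2 + 1/2 = 1)
    have hm : (x + y) / 2 ∈ I := by
      have h := hIconv hx hy (by norm_num : (0:ℝ) ≤ 1/2) (by norm_num : (0:ℝ) ≤ 1/2)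
        (by norm_num : (1:ℝ)/2 + 1/2 = 1)
      have e : (1/2 : ℝ) • x + (1/2 : ℝ) • y = (x + y) / 2 := by
        simp [smul_eq_mul]; ring
      rwa [e] at h
    have hcombo : (1/2 : ℝ) • φ + (1/2 : ℝ) • ψ = fun _ : Ω => (x + y) / 2 := by
      funext ω
      simp only [Pi.add_apply, Pi.smul_apply, smul_eq_mul, hφdef, hψdef]
      by_cases h : ω ∈ A <;> simp [h] <;> ring
    have hconst : fPotential P f I (fun _ : Ω => (x + y) / 2) = (x + y) / 2 := by
      unfold fPotential
      rw [integral_const]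
      simp only [Measure.real, measure_univ, ENNReal.toReal_one, one_smul]
      exact hinj.leftInvOn_invFunOn hm
    have hlphi : fPotential P f I φ = g (p * f x + (1 - p) * f y) := by
      have heq2 : (fun ω => f (φ ω)) = (fun ω => if ω ∈ A then f x else f y) := by
        funext ω; by_cases h : ω ∈ A <;> simp [hφdef, h]
      unfold fPotential
      rw [hgdef, hpdef]
      congr 1
      rw [heq2]
      exact integral_ite_const P hA (f x) (f y)
    have hlpsi : fPotential P f I ψ = g (p * f y + (1 - p) * f x) := by
      have heq2 : (fun ω => f (ψ ω)) = (fun ω => if ω ∈ A then f y else f x) := by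
        funext ω; by_cases h : ω ∈ A <;> simp [hψdef, h]
      unfold fPotential
      rw [hgdef, hpdef]
      congr 1
      rw [heq2]
      exact integral_ite_const P hA (f y) (f x)
    rw [hcombo, hconst, hlphi, hlpsi, smul_eq_mul, smul_eq_mul] at hcomb
    linarith
  -- intermediate value: image lemma
  have himg : ∀ x ∈ I, ∀ y ∈ I, ∀ w ∈ Set.uIcc (f x) (f y), ∃ z ∈ I, f z = w := by
    intro x hx y hy w hw
    have hsub : Set.uIcc x y ⊆ I := hIconv.ordConnected.uIcc_subset hx hy
    have hiv : Set.uIcc (f x) (f y) ⊆ f '' Set.uIcc x y :=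
      intermediate_value_uIcc (hfc.mono hsub)
    obtain ⟨z, hz, rfl⟩ := hiv hw
    exact ⟨z, hsub hz, rfl⟩
  -- midpoint convexity
  have hmidpt : ∀ x ∈ I, ∀ y ∈ I, f ((x + y) / 2) ≤ (f x + f y) / 2 := by
    intro x hx y hy
    set u := f x with hu
    set v := f y with hv
    set s := (u + v) / 2 with hs
    set d := (u - v) / 2 with hd
    set r := 2 * p - 1 with hr
    have hrabs : |r| < 1 := abs_lt.2 ⟨by rw [hr]; linarith, by rw [hr]; linarith⟩
    have hm : (x + y) / 2 ∈ I := by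
      have h := hIconv hx hy (by norm_num : (0:ℝ) ≤ 1/2) (by norm_num : (0:ℝ) ≤ 1/2)
        (by norm_num : (1:ℝ)/2 + 1/2 = 1)
      have e : (1/2 : ℝ) • x + (1/2 : ℝ) • y = (x + y) / 2 := by
        simp [smul_eq_mul]; ring
      rwa [e] at h
    have hbound : ∀ c : ℝ, |c| ≤ 1 → ∃ z ∈ I, f z = s + c * d := by
      intro c hc
      apply himg x hx y hy
      have habs : |c * d| ≤ |d| := by
        rw [abs_mul]
        calc |c| * |d| ≤ 1 * |d| := mul_le_mul_of_nonneg_right hc (abs_nonneg d)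
          _ = |d| := one_mul _
      have h1 : -|d| ≤ c * d := le_trans (neg_le_neg habs) (neg_abs_le _)
      have h2 : c * d ≤ |d| := (le_abs_self _).trans habs
      rcases le_total u v with h | h
      · have hd' : |d| = -d := abs_of_nonpos (by rw [hd]; linarith)
        rw [Set.mem_uIcc]
        left
        constructor
        · rw [← hu]; rw [hd'] at h1; rw [hs, hd] at *; linarith
        · rw [← hv]; rw [hd'] at h2; rw [hs, hd] at *; linarith
      · have hd' : |d| = d := abs_of_nonneg (by rw [hd]; linarith)
        rw [Set.mem_uIcc]
        right
        constructor
        · rw [← hv]; rw [hd'] at h1; rw [hs, hd] at *; linarith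
        · rw [← hu]; rw [hd'] at h2; rw [hs, hd] at *; linarith
    have hrpow : ∀ n : ℕ, |r ^ n| ≤ 1 := by
      intro n
      rw [abs_pow]
      exact pow_le_one₀ (abs_nonneg r) hrabs.le
    have hiter : ∀ n : ℕ, x + y ≤ g (s + r ^ n * d) + g (s - r ^ n * d) := by
      intro n
      induction n with
      | zero =>
        have e1 : s + r ^ 0 * d = u := by rw [pow_zero, one_mul, hs, hd]; ring
        have e2 : s - r ^ 0 * d = v := by rw [pow_zero, one_mul, hs, hd]; ring
        rw [e1, e2, hu, hv, hgdef, hinj.leftInvOn_invFunOn hx, hinj.leftInvOn_invFunOn hy]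
      | succ n ih =>
        obtain ⟨z1, hz1I, hfz1⟩ := hbound (r ^ n) (hrpow n)
        obtain ⟨z2, hz2I, hfz2⟩ := hbound (-(r ^ n)) (by rw [abs_neg]; exact hrpow n)
        have hfz2' : f z2 = s - r ^ n * d := by rw [hfz2]; ring
        have hg1 : g (s + r ^ n * d) = z1 := by
          rw [← hfz1, hgdef]; exact hinj.leftInvOn_invFunOn hz1I
        have hg2 : g (s - r ^ n * d) = z2 := by
          rw [← hfz2', hgdef]; exact hinj.leftInvOn_invFunOn hz2I
        have hk := key z1 hz1I z2 hz2I
        have e1 : p * f z1 + (1 - p) * f z2 = s + r ^ (n + 1) * d := by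
          rw [hfz1, hfz2', hr]; ring
        have e2 : p * f z2 + (1 - p) * f z1 = s - r ^ (n + 1) * d := by
          rw [hfz1, hfz2', hr]; ring
        rw [e1, e2] at hk
        rw [hg1, hg2] at ih
        linarith
    have hfinal : ∀ n : ℕ, f ((x + y) / 2) ≤ s + |r| ^ n * |d| := by
      intro n
      obtain ⟨z1, hz1I, hfz1⟩ := hbound (r ^ n) (hrpow n)
      obtain ⟨z2, hz2I, hfz2⟩ := hbound (-(r ^ n)) (by rw [abs_neg]; exact hrpow n)
      have hfz2' : f z2 = s - r ^ n * d := by rw [hfz2]; ring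
      have hg1 : g (s + r ^ n * d) = z1 := by
        rw [← hfz1, hgdef]; exact hinj.leftInvOn_invFunOn hz1I
      have hg2 : g (s - r ^ n * d) = z2 := by
        rw [← hfz2', hgdef]; exact hinj.leftInvOn_invFunOn hz2I
      have h := hiter n
      rw [hg1, hg2] at h
      have habs1 : r ^ n * d ≤ |r| ^ n * |d| := by
        calc r ^ n * d ≤ |r ^ n * d| := le_abs_self _
          _ = |r| ^ n * |d| := by rw [abs_mul, abs_pow]
      have habs2 : -(r ^ n * d) ≤ |r| ^ n * |d| := by
        calc -(r ^ n * d) ≤ |r ^ n * d| := neg_le_abs _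
          _ = |r| ^ n * |d| := by rw [abs_mul, abs_pow]
      rcases le_total ((x + y) / 2) z1 with hle | hle
      · have := hfm.monotoneOn hm hz1I hle
        rw [hfz1] at this
        linarith
      · have hz2ge : (x + y) / 2 ≤ z2 := by linarith
        have := hfm.monotoneOn hm hz2I hz2ge
        rw [hfz2'] at this
        linarith
    have htend : Filter.Tendsto (fun n : ℕ => s + |r| ^ n * |d|) Filter.atTop (nhds s) := by
      have h1 := tendsto_pow_atTop_nhds_zero_of_lt_one (abs_nonneg r) hrabs
      have h2 := (h1.mul_const |d|).const_add s
      simpa using h2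
    have hle := ge_of_tendsto' htend hfinal
    rw [hs, hu, hv] at hle
    exact hle
  exact convexOn_of_midpoint_aux hIconv hfc hmidpt
end

section
/- Let I ⊆ ℝ be an open interval and let g : ℝ → ℝ be a function such that: (i) for every x ∈ I there exist C > 0 and δ > 0 with |g(x+t) − g(x)| ≤ C·|t| for all t with |t| < δ and x + t ∈ I (i.e. limsup_{t→0} |g(x+t) − g(x)|/|t| < ∞ at every point of I); and (ii) for Lebesgue-almost every x ∈ I, for every ε > 0 there exists δ > 0 such that |g(x+t) − g(x)| ≤ ε·|t| for all t with |t| < δ and x + t ∈ I (i.e. the limit limsup_{t→0} |g(x+t) − g(x)|/|t| equals 0 at almost every point of I). Then g is constant on I. -/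
open MeasureTheory Set

private lemma key_lemma (I : Set ℝ) (hIopen : IsOpen I) (hIconv : Convex ℝ I)
    (g : ℝ → ℝ)
    (hlip : ∀ x ∈ I, ∃ C > (0 : ℝ), ∃ δ > (0 : ℝ), ∀ t : ℝ, |t| < δ → x + t ∈ I →
      |g (x + t) - g x| ≤ C * |t|)
    (hae : ∀ᵐ x ∂(volume : Measure ℝ), x ∈ I →
      ∀ ε > (0 : ℝ), ∃ δ > (0 : ℝ), ∀ t : ℝ, |t| < δ → x + t ∈ I →
        |g (x + t) - g x| ≤ ε * |t|)
    (a : ℝ) (ha : a ∈ I) (b : ℝ) (hb : b ∈ I) (hab : a ≤ b)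
    (ε : ℝ) (hε : 0 < ε) : |g b - g a| ≤ ε * (b - a) + 2 * ε := by
  have hIcc : Icc a b ⊆ I := hIconv.ordConnected.out ha hb
  -- continuity of g on I
  have hg : ∀ x ∈ I, ContinuousAt g x := by
    intro x hx
    obtain ⟨C, hC, δ, hδ, hCd⟩ := hlip x hx
    rw [Metric.continuousAt_iff]
    intro ε' hε'
    obtain ⟨r, hr, hrI⟩ := Metric.isOpen_iff.1 hIopen x hx
    refine ⟨min (min δ r) (ε' / C), by positivity, fun {y} hy => ?_⟩
    have h1 : |y - x| < δ := lt_of_lt_of_le hy (le_trans (min_le_left _ _) (min_le_left _ _))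
    have h2 : |y - x| < r := lt_of_lt_of_le hy (le_trans (min_le_left _ _) (min_le_right _ _))
    have h3 : |y - x| < ε' / C := lt_of_lt_of_le hy (min_le_right _ _)
    have hyI : x + (y - x) ∈ I := by
      apply hrI; rw [Metric.mem_ball, Real.dist_eq]; simpa using h2
    have := hCd (y - x) h1 hyI
    rw [Real.dist_eq]
    have hxy : x + (y - x) = y := by ring
    rw [hxy] at this
    calc |g y - g x| ≤ C * |y - x| := this
      _ < C * (ε' / C) := by exact mul_lt_mul_of_pos_left h3 hC
      _ = ε' := by field_simp
  -- the bad set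
  set bad := {x : ℝ | ¬ (x ∈ I →
      ∀ ε > (0 : ℝ), ∃ δ > (0 : ℝ), ∀ t : ℝ, |t| < δ → x + t ∈ I →
        |g (x + t) - g x| ≤ ε * |t|)} with hbad_def
  have hbad : volume bad = 0 := ae_iff.mp hae
  -- open covers
  have hUex : ∀ n : ℕ, ∃ Un : Set ℝ, bad ⊆ Un ∧ IsOpen Un ∧
      volume Un < ENNReal.ofReal (ε / 2 ^ n / ((n : ℝ) + 1)) := by
    intro n
    have hpos : (0:ℝ) < ε / 2 ^ n / ((n : ℝ) + 1) := by positivity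
    obtain ⟨Un, h1, h2, h3⟩ := Set.exists_isOpen_lt_of_lt bad
      (ENNReal.ofReal (ε / 2 ^ n / ((n : ℝ) + 1)))
      (by rw [hbad]; exact ENNReal.ofReal_pos.2 hpos)
    exact ⟨Un, h1, h2, h3⟩
  choose U hUb hUo hUv using hUex
  have hUfin : ∀ n, volume (U n) ≠ ⊤ := fun n => ((hUv n).trans ENNReal.ofReal_lt_top).ne
  set f : ℕ → ℝ → ℝ := fun n x => (volume (U n ∩ Icc a x)).toReal with hf_def
  have hfinter : ∀ n x, volume (U n ∩ Icc a x) ≠ ⊤ := by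
    intro n x
    have h1 : volume (U n ∩ Icc a x) ≤ volume (U n) := measure_mono Set.inter_subset_left
    exact ne_top_of_le_ne_top (hUfin n) h1
  have f_nonneg : ∀ n x, 0 ≤ f n x := fun n x => ENNReal.toReal_nonneg
  have f_bd : ∀ n x, f n x ≤ ε / 2 ^ n / ((n : ℝ) + 1) := by
    intro n x
    apply ENNReal.toReal_le_of_le_ofReal (by positivity)
    exact (measure_mono inter_subset_left).trans (hUv n).le
  have f_mono : ∀ n, Monotone (f n) := by
    intro n x y hxy
    exact ENNReal.toReal_mono (hfinter n y)
      (measure_mono (inter_subset_inter_right _ (Icc_subset_Icc_right hxy)))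
  have f_lip : ∀ n (x y : ℝ), x ≤ y → f n y ≤ f n x + (y - x) := by
    intro n x y hxy
    have hsub : U n ∩ Icc a y ⊆ (U n ∩ Icc a x) ∪ Ioc x y := by
      rintro z ⟨hz1, hz2, hz3⟩
      rcases le_or_gt z x with h | h
      · exact Or.inl ⟨hz1, hz2, h⟩
      · exact Or.inr ⟨h, hz3⟩
    have hle : volume (U n ∩ Icc a y) ≤ volume (U n ∩ Icc a x) + volume (Ioc x y) :=
      (measure_mono hsub).trans (measure_union_le _ _)
    rw [Real.volume_Ioc] at hle
    calc f n y ≤ (volume (U n ∩ Icc a x) + ENNReal.ofReal (y - x)).toReal :=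
        ENNReal.toReal_mono (by
          exact ENNReal.add_ne_top.2 ⟨hfinter n x, ENNReal.ofReal_ne_top⟩) hle
      _ = f n x + (y - x) := by
          rw [ENNReal.toReal_add (hfinter n x) ENNReal.ofReal_ne_top,
            ENNReal.toReal_ofReal (by linarith)]
  have f_cont : ∀ n, Continuous (f n) := by
    intro n
    have : LipschitzWith 1 (f n) := by
      apply LipschitzWith.of_dist_le_mul
      intro x y
      rw [Real.dist_eq, Real.dist_eq, NNReal.coe_one, one_mul]
      rcases le_total x y with h | h
      · have h1 := f_mono n h
        have h2 := f_lip n x y h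
        rw [abs_sub_comm, abs_of_nonneg (by linarith), abs_of_nonpos (by linarith)]
        linarith
      · have h1 := f_mono n h
        have h2 := f_lip n y x h
        rw [abs_of_nonneg (by linarith), abs_of_nonneg (by linarith)]
        linarith
    exact this.continuous
  have f_grow : ∀ n (x t : ℝ), a ≤ x → 0 < t → Ioc x (x + t) ⊆ U n →
      f n x + t ≤ f n (x + t) := by
    intro n x t hx ht hsub
    have hdisj : Disjoint (U n ∩ Icc a x) (Ioc x (x + t)) := by
      rw [Set.disjoint_left]
      rintro z ⟨_, _, hz⟩ ⟨hz', _⟩; linarith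
    have hsub2 : (U n ∩ Icc a x) ∪ Ioc x (x + t) ⊆ U n ∩ Icc a (x + t) := by
      rintro z (⟨h1, h2, h3⟩ | hz)
      · exact ⟨h1, h2, by linarith⟩
      · exact ⟨hsub hz, ⟨by linarith [hz.1], hz.2⟩⟩
    have hle : volume ((U n ∩ Icc a x) ∪ Ioc x (x + t)) ≤ volume (U n ∩ Icc a (x + t)) :=
      measure_mono hsub2
    rw [measure_union hdisj measurableSet_Ioc, Real.volume_Ioc] at hle
    have := ENNReal.toReal_mono (hfinter n (x + t)) hle
    rw [ENNReal.toReal_add (hfinter n x) ENNReal.ofReal_ne_top,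
      ENNReal.toReal_ofReal (by linarith [show x ≤ x + t by linarith])] at this
    have hxt : x + t - x = t := by ring
    rw [hxt] at this
    exact this
  -- the series
  set S : ℝ → ℝ := fun x => ∑' n : ℕ, ((n : ℝ) + 1) * f n x with hS_def
  have hterm_bd : ∀ (n : ℕ) (x : ℝ), ((n : ℝ) + 1) * f n x ≤ ε / 2 ^ n := by
    intro n x
    have h1 : ((n : ℝ) + 1) * f n x ≤ ((n : ℝ) + 1) * (ε / 2 ^ n / ((n : ℝ) + 1)) :=
      mul_le_mul_of_nonneg_left (f_bd n x) (by positivity)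
    have h2 : ((n : ℝ) + 1) * (ε / 2 ^ n / ((n : ℝ) + 1)) = ε / 2 ^ n := by
      field_simp
    linarith
  have hterm_nonneg : ∀ (n : ℕ) (x : ℝ), 0 ≤ ((n : ℝ) + 1) * f n x :=
    fun n x => mul_nonneg (by positivity) (f_nonneg n x)
  have hu : Summable (fun n : ℕ => ε / 2 ^ n) := by
    have : (fun n : ℕ => ε / 2 ^ n) = fun n : ℕ => ε * (1 / 2 : ℝ) ^ n := by
      funext n; rw [one_div, inv_pow, div_eq_mul_inv]
    rw [this]
    exact summable_geometric_two.mul_left ε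
  have htsum_u : ∑' n : ℕ, ε / 2 ^ n = 2 * ε := by
    have : (fun n : ℕ => ε / 2 ^ n) = fun n : ℕ => ε * (1 / 2 : ℝ) ^ n := by
      funext n; rw [one_div, inv_pow, div_eq_mul_inv]
    rw [this, tsum_mul_left, tsum_geometric_two]; ring
  have hS_summ : ∀ x, Summable (fun n : ℕ => ((n : ℝ) + 1) * f n x) := by
    intro x
    exact hu.of_nonneg_of_le (fun n => hterm_nonneg n x) (fun n => hterm_bd n x)
  have hS_nonneg : ∀ x, 0 ≤ S x := fun x => tsum_nonneg (fun n => hterm_nonneg n x)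
  have hS_mono : Monotone S := by
    intro x y hxy
    exact Summable.tsum_le_tsum
      (fun n => mul_le_mul_of_nonneg_left (f_mono n hxy) (by positivity))
      (hS_summ x) (hS_summ y)
  have hS_cont : Continuous S := by
    apply continuous_tsum (u := fun n : ℕ => ε / 2 ^ n)
    · exact fun n => continuous_const.mul (f_cont n)
    · exact hu
    · intro n x
      rw [Real.norm_eq_abs, abs_of_nonneg (hterm_nonneg n x)]
      exact hterm_bd n x
  have hS_bd : ∀ x, S x ≤ 2 * ε := by
    intro x
    calc S x ≤ ∑' n : ℕ, ε / 2 ^ n := Summable.tsum_le_tsum (fun n => hterm_bd n x) (hS_summ x) hu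
      _ = 2 * ε := htsum_u
  have hS_grow : ∀ (n : ℕ) (x t : ℝ), a ≤ x → 0 < t → Ioc x (x + t) ⊆ U n →
      S x + ((n : ℝ) + 1) * t ≤ S (x + t) := by
    intro n x t hx ht hsub
    have hind : Summable (fun k : ℕ => if k = n then ((n : ℝ) + 1) * t else 0) := by
      apply summable_of_ne_finset_zero (s := {n})
      intro k hk
      rw [if_neg (by simpa using hk)]
    have h1 : ∀ k : ℕ, ((k : ℝ) + 1) * f k x + (if k = n then ((n : ℝ) + 1) * t else 0) ≤
        ((k : ℝ) + 1) * f k (x + t) := by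
      intro k
      by_cases hk : k = n
      · subst hk
        rw [if_pos rfl]
        have h2 := f_grow k x t hx ht hsub
        nlinarith [Nat.cast_nonneg (α := ℝ) k]
      · rw [if_neg hk, add_zero]
        exact mul_le_mul_of_nonneg_left (f_mono k (by linarith : x ≤ x + t)) (by positivity)
    calc S x + ((n : ℝ) + 1) * t
        = ∑' k : ℕ, (((k : ℝ) + 1) * f k x + (if k = n then ((n : ℝ) + 1) * t else 0)) := by
          rw [Summable.tsum_add (hS_summ x) hind, tsum_ite_eq]
      _ ≤ S (x + t) := Summable.tsum_le_tsum h1 ((hS_summ x).add hind) (hS_summ (x + t))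
  -- continuous induction
  set h : ℝ → ℝ := fun x => |g x - g a| - (ε * (x - a) + S x) with hh_def
  have hh_cont : ContinuousOn h (Icc a b) := by
    intro x hx
    have hxI : x ∈ I := hIcc hx
    have hcg : ContinuousAt (fun y => |g y - g a|) x := ((hg x hxI).sub continuousAt_const).abs
    have hrest : Continuous (fun y : ℝ => ε * (y - a) + S y) :=
      (continuous_const.mul (continuous_id.sub continuous_const)).add hS_cont
    exact (hcg.sub hrest.continuousAt).continuousWithinAt
  set T : Set ℝ := Icc a b ∩ h ⁻¹' (Iic 0) with hT_def
  have hT_closed : IsClosed T := hh_cont.preimage_isClosed_of_isClosed isClosed_Icc isClosed_Iic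
  have haT : a ∈ T := by
    constructor
    · exact ⟨le_refl a, hab⟩
    · simp only [mem_preimage, mem_Iic, hh_def]
      have := hS_nonneg a
      simp only [sub_self, abs_zero]
      linarith
  have hT_bdd : BddAbove T := ⟨b, fun x hx => hx.1.2⟩
  set s := sSup T with hs_def
  have hsT : s ∈ T := hT_closed.csSup_mem ⟨a, haT⟩ hT_bdd
  have hs_ab : s ∈ Icc a b := hsT.1
  have hs_le : |g s - g a| ≤ ε * (s - a) + S s := by
    have := hsT.2
    simp only [mem_preimage, mem_Iic, hh_def] at this
    linarith
  have hsI : s ∈ I := hIcc hs_ab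
  -- show s = b
  have hsb : s = b := by
    by_contra hne
    have hslt : s < b := lt_of_le_of_ne hs_ab.2 hne
    -- common step: given t > 0 with s + t ≤ b and the pointwise bound, contradiction
    have extend : ∀ t : ℝ, 0 < t → s + t ≤ b →
        |g (s + t) - g a| ≤ ε * (s + t - a) + S (s + t) → False := by
      intro t ht htb hbound
      have hmem : s + t ∈ T := by
        refine ⟨⟨by linarith [hs_ab.1], htb⟩, ?_⟩
        simp only [mem_preimage, mem_Iic, hh_def]
        linarith
      have := le_csSup hT_bdd hmem
      rw [← hs_def] at this
      linarith
    by_cases hsbad : s ∈ bad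
    · -- Lipschitz case
      obtain ⟨C, hC, δ, hδ, hCb⟩ := hlip s hsI
      set n := ⌈C⌉₊ with hn_def
      have hCn : C ≤ (n : ℝ) + 1 := (Nat.le_ceil C).trans (by linarith)
      have hsU : s ∈ U n := hUb n hsbad
      obtain ⟨r, hr, hrU⟩ := Metric.isOpen_iff.1 (hUo n) s hsU
      set t := min (min (δ / 2) (r / 2)) (b - s) with ht_def
      have ht : 0 < t := lt_min (lt_min (by linarith) (by linarith)) (by linarith)
      have htb : s + t ≤ b := by
        have := min_le_right (min (δ / 2) (r / 2)) (b - s); linarith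
      have htδ : |t| < δ := by
        rw [abs_of_pos ht]
        have := (min_le_left (min (δ / 2) (r / 2)) (b - s)).trans
          (min_le_left (δ / 2) (r / 2))
        linarith
      have hstI : s + t ∈ I := hIcc ⟨by linarith [hs_ab.1], htb⟩
      have hglip := hCb t htδ hstI
      rw [abs_of_pos ht] at hglip
      have hsub : Ioc s (s + t) ⊆ U n := by
        intro z hz
        apply hrU
        rw [Metric.mem_ball, Real.dist_eq, abs_of_pos (by linarith [hz.1] : (0:ℝ) < z - s)]
        have h2 : t ≤ r / 2 := (min_le_left (min (δ / 2) (r / 2)) (b - s)).trans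
          (min_le_right (δ / 2) (r / 2))
        have := hz.2
        linarith
      have hgr := hS_grow n s t hs_ab.1 ht hsub
      apply extend t ht htb
      calc |g (s + t) - g a| ≤ |g (s + t) - g s| + |g s - g a| := abs_sub_le _ _ _
        _ ≤ C * t + (ε * (s - a) + S s) := by linarith
        _ ≤ ε * (s + t - a) + S (s + t) := by nlinarith
    · -- good case
      have hgood : ∀ ε' > (0:ℝ), ∃ δ > (0:ℝ), ∀ t : ℝ, |t| < δ → s + t ∈ I →
          |g (s + t) - g s| ≤ ε' * |t| := by
        have := not_not.mp (fun hc => hsbad hc)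
        exact this hsI
      obtain ⟨δ, hδ, hδ'⟩ := hgood ε hε
      set t := min (δ / 2) (b - s) with ht_def
      have ht : 0 < t := lt_min (by linarith) (by linarith)
      have htb : s + t ≤ b := by have := min_le_right (δ / 2) (b - s); linarith
      have htδ : |t| < δ := by
        rw [abs_of_pos ht]
        have := min_le_left (δ / 2) (b - s); linarith
      have hstI : s + t ∈ I := hIcc ⟨by linarith [hs_ab.1], htb⟩
      have hgb := hδ' t htδ hstI
      rw [abs_of_pos ht] at hgb
      have hSm : S s ≤ S (s + t) := hS_mono (by linarith)
      apply extend t ht htb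
      calc |g (s + t) - g a| ≤ |g (s + t) - g s| + |g s - g a| := abs_sub_le _ _ _
        _ ≤ ε * t + (ε * (s - a) + S s) := by linarith
        _ ≤ ε * (s + t - a) + S (s + t) := by nlinarith
  rw [hsb] at hs_le
  have := hS_bd b
  linarith

theorem constant_of_lipschitz_ae_null_derivative
    (I : Set ℝ) (hIopen : IsOpen I) (hIconv : Convex ℝ I)
    (g : ℝ → ℝ)
    (hlip : ∀ x ∈ I, ∃ C > (0 : ℝ), ∃ δ > (0 : ℝ), ∀ t : ℝ, |t| < δ → x + t ∈ I →
      |g (x + t) - g x| ≤ C * |t|)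
    (hae : ∀ᵐ x ∂(volume : Measure ℝ), x ∈ I →
      ∀ ε > (0 : ℝ), ∃ δ > (0 : ℝ), ∀ t : ℝ, |t| < δ → x + t ∈ I →
        |g (x + t) - g x| ≤ ε * |t|) :
    ∀ x ∈ I, ∀ y ∈ I, g x = g y := by
  have key : ∀ a ∈ I, ∀ b ∈ I, a ≤ b → g b = g a := by
    intro a ha b hb hab
    have h : ∀ ε > (0:ℝ), |g b - g a| ≤ ε * (b - a) + 2 * ε :=
      fun ε hε => key_lemma I hIopen hIconv g hlip hae a ha b hb hab ε hε
    have hle : |g b - g a| ≤ 0 := by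
      by_contra h'
      push_neg at h'
      set d := |g b - g a| with hd
      have hc : (0:ℝ) < b - a + 2 := by linarith
      have h2 := h (d / (2 * (b - a + 2))) (by positivity)
      have heq : d / (2 * (b - a + 2)) * (b - a) + 2 * (d / (2 * (b - a + 2))) = d / 2 := by
        field_simp
      rw [heq] at h2
      linarith
    have h0 : |g b - g a| = 0 := le_antisymm hle (abs_nonneg _)
    have := abs_eq_zero.mp h0
    linarith
  intro x hx y hy
  rcases le_total x y with h | h
  · exact (key x hx y hy h).symm
  · exact key y hy x hx h
end

section
/- Let (Ω, 𝔄, P) be a probability space. The geometric mean λ(φ) = exp(∫_Ω ln φ(ω) dP(ω)) is a concave functional on the set of measurable functions bounded away from 0 and ∞: if φ, ψ : Ω → ℝ are measurable with 0 < c ≤ φ(ω) ≤ C and 0 < c ≤ ψ(ω) ≤ C for all ω (for some constants c, C), and s ∈ [0,1], then exp ∫_Ω ln((1−s)φ + sψ) dP ≥ (1−s)·exp ∫_Ω ln φ dP + s·exp ∫_Ω ln ψ dP. -/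
open MeasureTheory

lemma log_integrable_aux
    {Ω : Type*} [MeasurableSpace Ω] (P : Measure Ω) [IsProbabilityMeasure P]
    (f : Ω → ℝ) (hf : Measurable f) (c C : ℝ) (hc : 0 < c)
    (hb : ∀ ω, c ≤ f ω ∧ f ω ≤ C) :
    Integrable (fun ω => Real.log (f ω)) P := by
  refine Integrable.mono' (integrable_const (max |Real.log c| |Real.log C|))
    ((Real.measurable_log.comp hf).aestronglyMeasurable) ?_
  filter_upwards with ω
  rw [Real.norm_eq_abs, abs_le]
  constructor
  · calc -(max |Real.log c| |Real.log C|) ≤ -|Real.log c| := by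
          simp [le_max_left]
      _ ≤ Real.log c := neg_abs_le _
      _ ≤ Real.log (f ω) := Real.log_le_log hc (hb ω).1
  · calc Real.log (f ω) ≤ Real.log C := Real.log_le_log (hc.trans_le (hb ω).1) (hb ω).2
      _ ≤ |Real.log C| := le_abs_self _
      _ ≤ max |Real.log c| |Real.log C| := le_max_right _ _

theorem geometric_mean_concave
    {Ω : Type*} [MeasurableSpace Ω] (P : Measure Ω) [IsProbabilityMeasure P]
    (φ ψ : Ω → ℝ) (hφm : Measurable φ) (hψm : Measurable ψ)
    (c C : ℝ) (hc : 0 < c)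
    (hφb : ∀ ω, c ≤ φ ω ∧ φ ω ≤ C) (hψb : ∀ ω, c ≤ ψ ω ∧ ψ ω ≤ C)
    (s : ℝ) (hs0 : 0 ≤ s) (hs1 : s ≤ 1) :
    (1 - s) * Real.exp (∫ ω, Real.log (φ ω) ∂P) +
        s * Real.exp (∫ ω, Real.log (ψ ω) ∂P) ≤
      Real.exp (∫ ω, Real.log ((1 - s) * φ ω + s * ψ ω) ∂P) := by
  rcases eq_or_lt_of_le hs0 with h0 | h0
  · simp [← h0]
  rcases eq_or_lt_of_le hs1 with h1 | h1
  · simp [h1]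
  have h1s : (0:ℝ) < 1 - s := by linarith
  set L1 := ∫ ω, Real.log (φ ω) ∂P with hL1
  set L2 := ∫ ω, Real.log (ψ ω) ∂P with hL2
  set A := Real.exp L1 with hA
  set B := Real.exp L2 with hB
  have hApos : 0 < A := Real.exp_pos _
  have hBpos : 0 < B := Real.exp_pos _
  set D := (1 - s) * A + s * B with hD
  have hDpos : 0 < D := by positivity
  set u := (1 - s) * A / D with hu
  set v := s * B / D with hv
  have hupos : 0 < u := by positivity
  have hvpos : 0 < v := by positivity
  have huv : u + v = 1 := by
    rw [hu, hv, ← add_div, hD, div_self hDpos.ne']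
  -- pointwise inequality
  have hφpos : ∀ ω, 0 < φ ω := fun ω => hc.trans_le (hφb ω).1
  have hψpos : ∀ ω, 0 < ψ ω := fun ω => hc.trans_le (hψb ω).1
  have hptw : ∀ ω,
      u * (Real.log ((1 - s) / u) + Real.log (φ ω)) +
        v * (Real.log (s / v) + Real.log (ψ ω)) ≤
      Real.log ((1 - s) * φ ω + s * ψ ω) := by
    intro ω
    have hx : (0:ℝ) < (1 - s) * φ ω / u := div_pos (mul_pos h1s (hφpos ω)) hupos
    have hy : (0:ℝ) < s * ψ ω / v := div_pos (mul_pos h0 (hψpos ω)) hvpos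
    have hcon := (strictConcaveOn_log_Ioi.concaveOn).2
      (Set.mem_Ioi.mpr hx) (Set.mem_Ioi.mpr hy) hupos.le hvpos.le huv
    simp only [smul_eq_mul] at hcon
    rw [mul_div_cancel₀ _ hupos.ne', mul_div_cancel₀ _ hvpos.ne'] at hcon
    have e1 : Real.log ((1 - s) * φ ω / u) = Real.log ((1 - s) / u) + Real.log (φ ω) := by
      rw [show (1 - s) * φ ω / u = (1 - s) / u * φ ω by ring,
        Real.log_mul (by positivity) (hφpos ω).ne']
    have e2 : Real.log (s * ψ ω / v) = Real.log (s / v) + Real.log (ψ ω) := by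
      rw [show s * ψ ω / v = s / v * ψ ω by ring,
        Real.log_mul (by positivity) (hψpos ω).ne']
    rw [e1, e2] at hcon
    exact hcon
  -- integrability
  have hintφ : Integrable (fun ω => Real.log (φ ω)) P :=
    log_integrable_aux P φ hφm c C hc hφb
  have hintψ : Integrable (fun ω => Real.log (ψ ω)) P :=
    log_integrable_aux P ψ hψm c C hc hψb
  have hintmix : Integrable (fun ω => Real.log ((1 - s) * φ ω + s * ψ ω)) P := by
    refine log_integrable_aux P _ (((measurable_const.mul hφm).add
      (measurable_const.mul hψm))) c C hc ?_
    intro ω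
    constructor
    · have : (1 - s) * c + s * c ≤ (1 - s) * φ ω + s * ψ ω := by
        gcongr <;> [exact (hφb ω).1; exact (hψb ω).1]
      linarith
    · have : (1 - s) * φ ω + s * ψ ω ≤ (1 - s) * C + s * C := by
        gcongr <;> [exact (hφb ω).2; exact (hψb ω).2]
      linarith
  have hintL : Integrable (fun ω =>
      u * (Real.log ((1 - s) / u) + Real.log (φ ω)) +
        v * (Real.log (s / v) + Real.log (ψ ω))) P := by
    exact (((integrable_const _).add hintφ).const_mul u).add
      (((integrable_const _).add hintψ).const_mul v)
  have hmono : ∫ ω, (u * (Real.log ((1 - s) / u) + Real.log (φ ω)) +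
        v * (Real.log (s / v) + Real.log (ψ ω))) ∂P ≤
      ∫ ω, Real.log ((1 - s) * φ ω + s * ψ ω) ∂P :=
    integral_mono hintL hintmix hptw
  -- compute the left integral
  have hcalc : ∫ ω, (u * (Real.log ((1 - s) / u) + Real.log (φ ω)) +
        v * (Real.log (s / v) + Real.log (ψ ω))) ∂P = Real.log D := by
    have expand : (fun ω => u * (Real.log ((1 - s) / u) + Real.log (φ ω)) +
        v * (Real.log (s / v) + Real.log (ψ ω))) = fun ω =>
        (u * Real.log ((1 - s) / u) + v * Real.log (s / v)) +
        (u * Real.log (φ ω) + v * Real.log (ψ ω)) := by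
      funext ω; ring
    have hg1 : Integrable (fun ω => u * Real.log (φ ω)) P := hintφ.const_mul u
    have hg2 : Integrable (fun ω => v * Real.log (ψ ω)) P := hintψ.const_mul v
    have hg : Integrable (fun ω => u * Real.log (φ ω) + v * Real.log (ψ ω)) P := hg1.add hg2
    rw [expand, integral_add (integrable_const _) hg,
      integral_add hg1 hg2,
      integral_const_mul, integral_const_mul, integral_const]
    simp only [measure_univ, probReal_univ, ENNReal.toReal_one, smul_eq_mul, one_mul]
    have e1 : Real.log ((1 - s) / u) + L1 = Real.log D := by
      have hAD : (1 - s) / u * A = D := by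
        rw [hu]; field_simp
      calc Real.log ((1 - s) / u) + L1
          = Real.log ((1 - s) / u) + Real.log (Real.exp L1) := by rw [Real.log_exp]
        _ = Real.log ((1 - s) / u * Real.exp L1) := by
            rw [Real.log_mul (by positivity) (Real.exp_ne_zero _)]
        _ = Real.log D := by rw [← hA, hAD]
    have e2 : Real.log (s / v) + L2 = Real.log D := by
      have hBD : s / v * B = D := by
        rw [hv]; field_simp
      calc Real.log (s / v) + L2
          = Real.log (s / v) + Real.log (Real.exp L2) := by rw [Real.log_exp]
        _ = Real.log (s / v * Real.exp L2) := by
            rw [Real.log_mul (by positivity) (Real.exp_ne_zero _)]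
        _ = Real.log D := by rw [← hB, hBD]
    linear_combination u * e1 + v * e2 + Real.log D * huv
  have hkey : Real.log D ≤ ∫ ω, Real.log ((1 - s) * φ ω + s * ψ ω) ∂P := by
    rw [← hcalc]; exact hmono
  calc (1 - s) * A + s * B = D := rfl
    _ = Real.exp (Real.log D) := (Real.exp_log hDpos).symm
    _ ≤ Real.exp (∫ ω, Real.log ((1 - s) * φ ω + s * ψ ω) ∂P) :=
        Real.exp_le_exp.mpr hkey
end
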